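/- arXiv:1602.02132 — 3 statements merged into one kernel-verified Lean document; each statement's English description precedes it below -/
import Mathlib

section
/- Let X be a complex Banach space, let φ ∈ X, let r > 0 and let Ω_r(φ) be the open ball of radius r around φ in X. Suppose U and U_n (n ≥ 1) are continuous compact (possibly nonlinear) maps from Ω_r(φ) into X with U(φ) = φ, the sequence (U_n) is collectively compact (i.e., for every bounded subset B of Ω_r(φ) the set ⋃_{n≥1} U_n(B) has compact closure in X), U_n(x) → U(x) as n → ∞ for every x ∈ Ω_r(φ), and there exists r_φ ∈ (0, r] such that U and each U_n are twice Fréchet differentiable on the ball Ω_{r_φ}(φ) with a common bound M(φ,r) on the operator norms of all second derivatives U''(x) and U_n''(x) for x in that ball. If 1 is not an eigenvalue of the Fréchet derivative U'(φ), then φ is an isolated fixed point of U, and there exist ε ∈ (0, r_φ) and n_ε > 0 such that for all n ≥ n_ε the map U_n has a unique fixed point φ_n in the ball Ω_ε(φ); moreover there is a constant γ > 0 such that ‖φ − φ_n‖ ≤ γ ‖U(φ) − U_n(φ)‖ for all n ≥ n_ε. -/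
open Metric Filter Bornology
noncomputable section

open Set Topology in
/-- A set that is, for every `ε`, within `ε` of a compact set is totally bounded. -/
private lemma atk_totallyBounded {X : Type*} [NormedAddCommGroup X]
    {S : Set X} (h : ∀ ε > (0:ℝ), ∃ K : Set X, IsCompact K ∧ ∀ s ∈ S, ∃ p ∈ K, dist s p ≤ ε) :
    TotallyBounded S := by
  rw [Metric.totallyBounded_iff]
  intro ε hε
  obtain ⟨K, hK, hSK⟩ := h (ε/3) (by linarith)
  obtain ⟨t, ht, hcov⟩ := (Metric.totallyBounded_iff.mp hK.totallyBounded) (ε/3) (by linarith)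
  refine ⟨t, ht, fun s hs => ?_⟩
  obtain ⟨p, hpK, hsp⟩ := hSK s hs
  obtain ⟨y, hyt, hpy⟩ := Set.mem_iUnion₂.mp (hcov hpK)
  refine Set.mem_iUnion₂.mpr ⟨y, hyt, ?_⟩
  rw [Metric.mem_ball] at *
  calc dist s y ≤ dist s p + dist p y := dist_triangle _ _ _
    _ < ε := by linarith

open Set Topology in
/-- Riesz–Fredholm alternative: if `T` is a compact operator on a real Banach space and
`I - T` is bounded below, then `I - T` is surjective. -/
private lemma atk_fredholm {X : Type*} [NormedAddCommGroup X] [NormedSpace ℝ X] [CompleteSpace X]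
    (T : X →L[ℝ] X) (hTc : IsCompact (closure (⇑T '' Metric.closedBall 0 1)))
    {c : ℝ} (hc : 0 < c) (hlow : ∀ v, c * ‖v‖ ≤ ‖v - T v‖) :
    ∀ y : X, ∃ v, v - T v = y := by
  classical
  set S : X →L[ℝ] X := ContinuousLinearMap.id ℝ X - T with hS
  have hSapp : ∀ v, S v = v - T v := fun v => rfl
  have hTapp : ∀ v, T v = v - S v := fun v => by rw [hSapp]; abel
  -- bounded below for powers
  have hlowk : ∀ k : ℕ, ∀ v, c ^ k * ‖v‖ ≤ ‖(S ^ k) v‖ := by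
    intro k
    induction k with
    | zero => intro v; simp
    | succ k ih =>
      intro v
      have h1 : (S ^ (k+1)) v = (S ^ k) (S v) := by
        rw [pow_succ]; rfl
      rw [h1, pow_succ, mul_assoc]
      calc c ^ k * (c * ‖v‖) ≤ c ^ k * ‖S v‖ := by
            have := hlow v
            rw [← hSapp] at this
            exact mul_le_mul_of_nonneg_left this (by positivity)
        _ ≤ ‖(S ^ k) (S v)‖ := ih (S v)
  have hinjk : ∀ k : ℕ, Function.Injective (⇑(S ^ k)) := by
    intro k a b hab
    have h := hlowk k (a - b)
    rw [map_sub, hab, sub_self, norm_zero] at h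
    have : ‖a - b‖ ≤ 0 := by
      nlinarith [norm_nonneg (a - b), pow_pos hc k]
    rwa [norm_le_zero_iff, sub_eq_zero] at this
  -- closed ranges
  have hclosedk : ∀ k : ℕ, IsClosed (Set.range (⇑(S ^ k))) := by
    intro k
    have hanti : AntilipschitzWith ((c ^ k)⁻¹.toNNReal) (⇑(S ^ k)) := by
      apply ContinuousLinearMap.antilipschitz_of_bound
      intro x
      have h := hlowk k x
      rw [Real.coe_toNNReal _ (by positivity)]
      rw [le_inv_mul_iff₀ (by positivity : (0:ℝ) < c ^ k)]
      exact h
    exact hanti.isClosed_range (S ^ k).uniformContinuous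
  set Y : ℕ → Submodule ℝ X := fun k => LinearMap.range ((S ^ k : X →L[ℝ] X) : X →ₗ[ℝ] X) with hY
  have hYset : ∀ k, (Y k : Set X) = Set.range (⇑(S ^ k)) := by
    intro k; ext z; exact Iff.rfl
  have hYclosed : ∀ k, IsClosed (Y k : Set X) := fun k => (hYset k) ▸ hclosedk k
  have hmono : ∀ k m : ℕ, ∀ v ∈ Y (k + m), v ∈ Y k := by
    intro k m v hv
    obtain ⟨w, hw⟩ := hv
    refine ⟨(S ^ m) w, ?_⟩
    have : (S ^ (k + m)) w = (S ^ k) ((S ^ m) w) := by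
      rw [pow_add]; rfl
    rw [ContinuousLinearMap.coe_coe, ← this]; exact hw
  have hmono' : ∀ k l : ℕ, k ≤ l → ∀ v ∈ Y l, v ∈ Y k := by
    intro k l hkl v hv
    obtain ⟨m, rfl⟩ := Nat.exists_eq_add_of_le hkl
    exact hmono k m v hv
  have hSmap : ∀ k, ∀ v ∈ Y k, S v ∈ Y (k + 1) := by
    rintro k v ⟨w, hw⟩
    refine ⟨w, ?_⟩
    have : (S ^ (k + 1)) w = S ((S ^ k) w) := by
      rw [pow_succ']; rfl
    rw [ContinuousLinearMap.coe_coe] at hw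
    rw [ContinuousLinearMap.coe_coe, this, hw]
  -- suppose not surjective
  by_contra hcon
  push_neg at hcon
  obtain ⟨y, hy⟩ := hcon
  have hyS : ∀ v, S v ≠ y := fun v h => hy v (by rw [← hSapp]; exact h)
  have hnotin : ∀ k : ℕ, (S ^ k) y ∉ Y (k + 1) := by
    rintro k ⟨z, hz⟩
    have hz' : (S ^ k) (S z) = (S ^ k) y := by
      have : (S ^ (k + 1)) z = (S ^ k) (S z) := by rw [pow_succ]; rfl
      rw [← this]; exact hz
    exact hyS z (hinjk k hz')
  -- Riesz sequence
  have hex : ∀ k : ℕ, ∃ x : X, x ∈ Y k ∧ ‖x‖ = 1 ∧ ∀ z ∈ Y (k + 1), (1:ℝ)/2 ≤ ‖x - z‖ := by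
    intro k
    set a := (S ^ k) y with ha
    have haY : a ∈ Y k := ⟨y, rfl⟩
    have haF : a ∉ Y (k + 1) := hnotin k
    have hne : (Y (k+1) : Set X).Nonempty := ⟨0, (Y (k+1)).zero_mem⟩
    set d := Metric.infDist a (Y (k+1) : Set X) with hd
    have hdpos : 0 < d := by
      rcases lt_or_eq_of_le (Metric.infDist_nonneg (s := (Y (k+1) : Set X)) (x := a)) with h | h
      · exact h
      · exfalso
        exact haF (((hYclosed (k+1)).mem_iff_infDist_zero hne).2 h.symm)
    obtain ⟨y', hy'F, hy'd⟩ := (Metric.infDist_lt_iff hne).mp (show d < 2 * d by linarith)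
    have hay' : a - y' ≠ 0 := by
      intro h
      rw [sub_eq_zero] at h
      exact haF (h ▸ hy'F)
    have hnorm_pos : 0 < ‖a - y'‖ := norm_pos_iff.mpr hay'
    refine ⟨‖a - y'‖⁻¹ • (a - y'), ?_, ?_, ?_⟩
    · exact Submodule.smul_mem _ _ (Submodule.sub_mem _ haY (hmono' k (k+1) (by omega) _ hy'F))
    · rw [norm_smul, norm_inv, norm_norm, inv_mul_cancel₀ (ne_of_gt hnorm_pos)]
    · intro z hz
      have hw : y' + ‖a - y'‖ • z ∈ Y (k + 1) :=
        Submodule.add_mem _ hy'F (Submodule.smul_mem _ _ hz)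
      have hdle : d ≤ ‖a - (y' + ‖a - y'‖ • z)‖ := by
        have := Metric.infDist_le_dist_of_mem (x := a) hw
        rwa [dist_eq_norm] at this
      have h1 : ‖a - y'‖⁻¹ • (‖a - y'‖ • z) = z := by
        rw [smul_smul, inv_mul_cancel₀ (ne_of_gt hnorm_pos), one_smul]
      have heq : ‖a - y'‖⁻¹ • (a - y') - z = ‖a - y'‖⁻¹ • (a - (y' + ‖a - y'‖ • z)) := by
        rw [show a - (y' + ‖a - y'‖ • z) = (a - y') - ‖a - y'‖ • z by abel]
        conv_rhs => rw [smul_sub, h1]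
      rw [heq, norm_smul, norm_inv, norm_norm]
      have h2d : ‖a - y'‖ < 2 * d := by rwa [dist_eq_norm] at hy'd
      have h4 : (2*d)⁻¹ ≤ ‖a - y'‖⁻¹ := inv_anti₀ hnorm_pos (le_of_lt h2d)
      have h5 : (2*d)⁻¹ * d = 1/2 := by
        field_simp [hdpos.ne']
      calc (1:ℝ)/2 = (2*d)⁻¹ * d := h5.symm
        _ ≤ ‖a - y'‖⁻¹ * ‖a - (y' + ‖a - y'‖ • z)‖ :=
            mul_le_mul h4 hdle hdpos.le (inv_nonneg.mpr hnorm_pos.le)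
  choose x hxY hxnorm hxsep using hex
  -- separation of T x k
  have hsep : ∀ k l : ℕ, k < l → (1:ℝ)/2 ≤ ‖T (x k) - T (x l)‖ := by
    intro k l hkl
    have heq : T (x k) - T (x l) = x k - (S (x k) + x l - S (x l)) := by
      rw [hTapp (x k), hTapp (x l)]; abel
    have hz : S (x k) + x l - S (x l) ∈ Y (k + 1) := by
      apply Submodule.sub_mem
      · exact Submodule.add_mem _ (hSmap k _ (hxY k)) (hmono' (k+1) l hkl _ (hxY l))
      · exact hmono' (k+1) (l+1) (by omega) _ (hSmap l _ (hxY l))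
    rw [heq]
    exact hxsep k _ hz
  -- compactness contradiction
  have hmem : ∀ k, T (x k) ∈ closure (⇑T '' Metric.closedBall 0 1) := by
    intro k
    apply subset_closure
    exact ⟨x k, by simp [hxnorm k], rfl⟩
  obtain ⟨w, _, σ, hσ, hconv⟩ := hTc.tendsto_subseq hmem
  have hconv' : Tendsto (fun j => T (x (σ (j + 1)))) atTop (𝓝 w) :=
    hconv.comp (tendsto_add_atTop_nat 1)
  have hdist : Tendsto (fun j => dist (T (x (σ j))) (T (x (σ (j+1))))) atTop (𝓝 0) := by
    have := (hconv.dist hconv')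
    simpa using this
  have hev : ∀ᶠ j in atTop, dist (T (x (σ j))) (T (x (σ (j+1)))) < 1/2 :=
    hdist.eventually (eventually_lt_nhds (by norm_num : (0:ℝ) < 1/2) |>.mono (fun _ h => h))
  obtain ⟨j, hj⟩ := hev.exists
  have := hsep (σ j) (σ (j+1)) (hσ (by omega))
  rw [dist_eq_norm] at hj
  linarith

set_option maxHeartbeats 4000000 in
/-- **Atkinson's theorem** (Theorem 4 in Atkinson, recalled as Theorem 2.1):
Let `X` be a complex Banach space, `φ ∈ X`, `r > 0`, and let `Ω_r(φ)` be the open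
ball of radius `r` around `φ`.  Suppose `U` and the `U n` (`n ≥ 1`) are continuous compact maps
from `Ω_r(φ)` into `X` with `U φ = φ`, the sequence `(U n)` is collectively compact,
`U n x → U x` for every `x ∈ Ω_r(φ)`, and on some smaller ball `Ω_{r_φ}(φ)` (`0 < r_φ ≤ r`)
all the maps are twice Fréchet differentiable with a common bound `M` on the second
derivatives.  If `1` is not an eigenvalue of `U'(φ)`, then `φ` is an isolated fixed point of `U`,
and there are `ε ∈ (0, r_φ)` and `n_ε > 0` such that for `n ≥ n_ε` the map `U n` has a unique
fixed point `φ_n` in `Ω_ε(φ)`, with `‖φ - φ_n‖ ≤ γ * ‖U φ - U n φ‖` for some constant `γ > 0`. -/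
theorem atkinson_fixed_point_theorem
    (X : Type*) [NormedAddCommGroup X] [NormedSpace ℂ X] [CompleteSpace X]
    (φ : X) (r : ℝ) (hr : 0 < r)
    (U : X → X) (Un : ℕ → X → X)
    (hfix : U φ = φ)
    (hUcont : ContinuousOn U (ball φ r))
    (hUcomp : ∀ B ⊆ ball φ r, IsBounded B → IsCompact (closure (U '' B)))
    (hUncont : ∀ n : ℕ, 1 ≤ n → ContinuousOn (Un n) (ball φ r))
    (hUncomp : ∀ n : ℕ, 1 ≤ n → ∀ B ⊆ ball φ r, IsBounded B →
      IsCompact (closure (Un n '' B)))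
    (hcc : ∀ B ⊆ ball φ r, IsBounded B →
      IsCompact (closure (⋃ n ∈ {m : ℕ | 1 ≤ m}, Un n '' B)))
    (hptw : ∀ x ∈ ball φ r, Tendsto (fun n : ℕ => Un n x) atTop (nhds (U x)))
    (rφ : ℝ) (hrφ : 0 < rφ) (hrφr : rφ ≤ r)
    (U' : X → X →L[ℝ] X) (U'' : X → X →L[ℝ] X →L[ℝ] X)
    (Un' : ℕ → X → X →L[ℝ] X) (Un'' : ℕ → X → X →L[ℝ] X →L[ℝ] X)
    (hdU1 : ∀ x ∈ ball φ rφ, HasFDerivAt U (U' x) x)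
    (hdU2 : ∀ x ∈ ball φ rφ, HasFDerivAt U' (U'' x) x)
    (hdUn1 : ∀ n : ℕ, 1 ≤ n → ∀ x ∈ ball φ rφ, HasFDerivAt (Un n) (Un' n x) x)
    (hdUn2 : ∀ n : ℕ, 1 ≤ n → ∀ x ∈ ball φ rφ, HasFDerivAt (Un' n) (Un'' n x) x)
    (M : ℝ)
    (hM : ∀ x ∈ ball φ rφ, ‖U'' x‖ ≤ M ∧ ∀ n : ℕ, 1 ≤ n → ‖Un'' n x‖ ≤ M)
    (heig : ∀ v : X, U' φ v = v → v = 0) :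
    (∃ δ > 0, ∀ x ∈ ball φ δ, U x = x → x = φ) ∧
    ∃ ε : ℝ, 0 < ε ∧ ε < rφ ∧ ∃ nε : ℕ, 0 < nε ∧
      (∀ n ≥ nε, ∃! φn : X, φn ∈ ball φ ε ∧ Un n φn = φn) ∧
      ∃ γ > 0, ∀ n ≥ nε, ∀ φn : X, φn ∈ ball φ ε ∧ Un n φn = φn →
        ‖φ - φn‖ ≤ γ * ‖U φ - Un n φ‖ := by
  classical
  have hφr : φ ∈ ball φ r := mem_ball_self hr
  have hφrφ : φ ∈ ball φ rφ := mem_ball_self hrφ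
  have hM0 : 0 ≤ M := le_trans (norm_nonneg (U'' φ)) (hM φ hφrφ).1
  set ρ : ℝ := rφ / 2 with hρdef
  have hρ0 : 0 < ρ := by positivity
  have hρrφ : ρ < rφ := by rw [hρdef]; linarith
  have hρr : ρ < r := lt_of_lt_of_le hρrφ hrφr
  have hBsub : closedBall φ ρ ⊆ ball φ rφ := closedBall_subset_ball hρrφ
  have hBsubr : closedBall φ ρ ⊆ ball φ r := closedBall_subset_ball hρr
  -- Taylor estimate with second-order bound
  have taylor : ∀ (V : X → X) (V' : X → X →L[ℝ] X) (V'' : X → X →L[ℝ] X →L[ℝ] X),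
      (∀ x ∈ ball φ rφ, HasFDerivAt V (V' x) x) →
      (∀ x ∈ ball φ rφ, HasFDerivAt V' (V'' x) x) →
      (∀ x ∈ ball φ rφ, ‖V'' x‖ ≤ M) →
      ∀ x ∈ closedBall φ ρ, ‖V x - V φ - V' φ (x - φ)‖ ≤ M * ‖x - φ‖ ^ 2 := by
    intro V V' V'' hd1 hd2 hb x hx
    have hxρ : ‖x - φ‖ ≤ ρ := by rwa [mem_closedBall, dist_eq_norm] at hx
    have hsub : closedBall φ ‖x - φ‖ ⊆ ball φ rφ :=
      closedBall_subset_ball (lt_of_le_of_lt hxρ hρrφ)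
    have hφmem : φ ∈ closedBall φ ‖x - φ‖ := mem_closedBall_self (norm_nonneg _)
    have hxmem : x ∈ closedBall φ ‖x - φ‖ := by
      rw [mem_closedBall, dist_eq_norm]
    have hlip : ∀ z ∈ closedBall φ ‖x - φ‖, ‖V' z - V' φ‖ ≤ M * ‖z - φ‖ := by
      intro z hz
      have := (convex_closedBall φ ‖x - φ‖).norm_image_sub_le_of_norm_hasFDerivWithin_le
        (f := V') (f' := V'') (C := M)
        (fun w hw => (hd2 w (hsub hw)).hasFDerivWithinAt)
        (fun w hw => hb w (hsub hw)) hφmem hz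
      exact this
    have hg : ∀ z ∈ closedBall φ ‖x - φ‖,
        HasFDerivWithinAt (fun w => V w - V' φ w) (V' z - V' φ) (closedBall φ ‖x - φ‖) z :=
      fun z hz => ((hd1 z (hsub hz)).sub ((V' φ).hasFDerivAt)).hasFDerivWithinAt
    have hgb : ∀ z ∈ closedBall φ ‖x - φ‖, ‖V' z - V' φ‖ ≤ M * ‖x - φ‖ := by
      intro z hz
      refine le_trans (hlip z hz) ?_
      have : ‖z - φ‖ ≤ ‖x - φ‖ := by rwa [mem_closedBall, dist_eq_norm] at hz
      exact mul_le_mul_of_nonneg_left this hM0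
    have hmvt := (convex_closedBall φ ‖x - φ‖).norm_image_sub_le_of_norm_hasFDerivWithin_le
      (f := fun w => V w - V' φ w) (f' := fun z => V' z - V' φ) (C := M * ‖x - φ‖)
      hg hgb hφmem hxmem
    have heq : V x - V φ - V' φ (x - φ) = (V x - V' φ x) - (V φ - V' φ φ) := by
      rw [map_sub]; abel
    rw [heq]
    calc ‖(V x - V' φ x) - (V φ - V' φ φ)‖ ≤ M * ‖x - φ‖ * ‖x - φ‖ := hmvt
      _ = M * ‖x - φ‖ ^ 2 := by ring
  have taylorU : ∀ x ∈ closedBall φ ρ, ‖U x - U φ - U' φ (x - φ)‖ ≤ M * ‖x - φ‖ ^ 2 :=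
    taylor U U' U'' hdU1 hdU2 (fun x hx => (hM x hx).1)
  have taylorUn : ∀ n : ℕ, 1 ≤ n → ∀ x ∈ closedBall φ ρ,
      ‖Un n x - Un n φ - Un' n φ (x - φ)‖ ≤ M * ‖x - φ‖ ^ 2 :=
    fun n hn => taylor (Un n) (Un' n) (Un'' n) (hdUn1 n hn) (hdUn2 n hn)
      (fun x hx => (hM x hx).2 n hn)
  -- Lipschitz estimate for the derivatives of `Un n`
  have dlip : ∀ n : ℕ, 1 ≤ n → ∀ z ∈ closedBall φ ρ, ‖Un' n z - Un' n φ‖ ≤ M * ‖z - φ‖ := by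
    intro n hn z hz
    exact (convex_closedBall φ ρ).norm_image_sub_le_of_norm_hasFDerivWithin_le
      (f := Un' n) (f' := Un'' n) (C := M)
      (fun w hw => (hdUn2 n hn w (hBsub hw)).hasFDerivWithinAt)
      (fun w hw => (hM w (hBsub hw)).2 n hn) (mem_closedBall_self hρ0.le) hz
  -- difference quotient estimate
  have dq : ∀ (V : X → X) (V' : X → X →L[ℝ] X),
      (∀ x ∈ closedBall φ ρ, ‖V x - V φ - V' φ (x - φ)‖ ≤ M * ‖x - φ‖ ^ 2) →
      ∀ t : ℝ, 0 < t → ∀ v : X, t * ‖v‖ ≤ ρ →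
      ‖t⁻¹ • (V (φ + t • v) - V φ) - V' φ v‖ ≤ M * t * ‖v‖ ^ 2 := by
    intro V V' htay t ht v hv
    have hnorm : ‖t • v‖ = t * ‖v‖ := by
      rw [norm_smul, Real.norm_eq_abs, abs_of_pos ht]
    have hmem : φ + t • v ∈ closedBall φ ρ := by
      rw [mem_closedBall, dist_eq_norm, add_sub_cancel_left, hnorm]
      exact hv
    have h1 := htay _ hmem
    rw [add_sub_cancel_left] at h1
    have h2 : t⁻¹ • (V (φ + t • v) - V φ) - V' φ v
        = t⁻¹ • (V (φ + t • v) - V φ - V' φ (t • v)) := by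
      conv_rhs => rw [map_smul, smul_sub, smul_smul]
      rw [inv_mul_cancel₀ (ne_of_gt ht), one_smul]
    rw [h2, norm_smul, norm_inv, Real.norm_eq_abs, abs_of_pos ht]
    calc t⁻¹ * ‖V (φ + t • v) - V φ - V' φ (t • v)‖ ≤ t⁻¹ * (M * ‖t • v‖ ^ 2) := by
          exact mul_le_mul_of_nonneg_left h1 (by positivity)
      _ = M * t * ‖v‖ ^ 2 := by rw [hnorm]; field_simp
  -- compact sets
  have hCU : IsCompact (closure (U '' closedBall φ ρ)) :=
    hUcomp _ hBsubr isBounded_closedBall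
  have hCN : IsCompact (closure (⋃ n ∈ {m : ℕ | 1 ≤ m}, Un n '' closedBall φ ρ)) :=
    hcc _ hBsubr isBounded_closedBall
  -- compactness of the derivative at φ
  have hcompactaux : ∀ (V : X → X) (V' : X → X →L[ℝ] X) (C : Set X),
      IsCompact C → (∀ x ∈ closedBall φ ρ, V x ∈ C) →
      (∀ x ∈ closedBall φ ρ, ‖V x - V φ - V' φ (x - φ)‖ ≤ M * ‖x - φ‖ ^ 2) →
      ∀ s ∈ ⇑(V' φ) '' closedBall 0 1,
        ∀ ε > (0:ℝ), ∃ p ∈ (fun q : X × X =>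
          (min ρ (ε / (M + 1)))⁻¹ • (q.1 - q.2)) '' (C ×ˢ C), dist s p ≤ ε := by
    intro V V' C hC hVC htay s hs ε hε
    set t := min ρ (ε / (M + 1)) with htdef
    have ht0 : 0 < t := lt_min hρ0 (by positivity)
    have htρ : t ≤ ρ := min_le_left _ _
    obtain ⟨v, hv, rfl⟩ := hs
    rw [mem_closedBall_zero_iff] at hv
    have htv : t * ‖v‖ ≤ ρ := by
      calc t * ‖v‖ ≤ t * 1 := mul_le_mul_of_nonneg_left hv ht0.le
        _ ≤ ρ := by rw [mul_one]; exact htρ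
    have hmem : φ + t • v ∈ closedBall φ ρ := by
      rw [mem_closedBall, dist_eq_norm, add_sub_cancel_left, norm_smul,
        Real.norm_eq_abs, abs_of_pos ht0]
      exact htv
    refine ⟨t⁻¹ • (V (φ + t • v) - V φ), ⟨(V (φ + t • v), V φ),
      Set.mem_prod.mpr ⟨hVC _ hmem, hVC φ (mem_closedBall_self hρ0.le)⟩, rfl⟩, ?_⟩
    rw [dist_eq_norm, norm_sub_rev]
    have := dq V V' htay t ht0 v htv
    have ht2 : t ≤ ε / (M + 1) := min_le_right _ _
    calc ‖t⁻¹ • (V (φ + t • v) - V φ) - V' φ v‖ ≤ M * t * ‖v‖ ^ 2 := this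
      _ ≤ M * t := by
          have h4 : ‖v‖ ^ 2 ≤ 1 := by nlinarith [hv, norm_nonneg v]
          nlinarith [mul_nonneg hM0 ht0.le, h4]
      _ ≤ ε := by
          have h3 : t * (M + 1) ≤ ε := (le_div_iff₀ (by positivity : (0:ℝ) < M + 1)).mp ht2
          nlinarith [ht0.le, hM0]
  have hCT : IsCompact (closure (⇑(U' φ) '' closedBall 0 1)) := by
    apply TotallyBounded.isCompact_of_isClosed _ isClosed_closure
    apply TotallyBounded.closure
    apply atk_totallyBounded
    intro ε hε
    refine ⟨_, ((hCU.prod hCU).image ((continuous_fst.sub continuous_snd).const_smul ((min ρ (ε / (M + 1)))⁻¹ : ℝ))), ?_⟩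
    intro s hs
    exact hcompactaux U U' _ hCU
      (fun x hx => subset_closure ⟨x, hx, rfl⟩) taylorU s hs ε hε
  have hCTn : IsCompact (closure (⋃ n ∈ {m : ℕ | 1 ≤ m}, ⇑(Un' n φ) '' closedBall 0 1)) := by
    apply TotallyBounded.isCompact_of_isClosed _ isClosed_closure
    apply TotallyBounded.closure
    apply atk_totallyBounded
    intro ε hε
    refine ⟨_, ((hCN.prod hCN).image ((continuous_fst.sub continuous_snd).const_smul ((min ρ (ε / (M + 1)))⁻¹ : ℝ))), ?_⟩
    intro s hs
    obtain ⟨n, hn, hs'⟩ := Set.mem_iUnion₂.mp hs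
    exact hcompactaux (Un n) (Un' n) _ hCN
      (fun x hx => subset_closure (Set.mem_iUnion₂.mpr ⟨n, hn, ⟨x, hx, rfl⟩⟩))
      (taylorUn n hn) s hs' ε hε
  -- uniform bound on the derivatives
  obtain ⟨K1, hK1⟩ := hCTn.isBounded.subset_closedBall 0
  set K2 : ℝ := max K1 0 + 1 with hK2def
  have hK2pos : 0 < K2 := by positivity
  have hK2 : ∀ n : ℕ, 1 ≤ n → ∀ v : X, ‖Un' n φ v‖ ≤ K2 * ‖v‖ := by
    intro n hn v
    rcases eq_or_ne v 0 with rfl | hv0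
    · simp
    · have hvpos : 0 < ‖v‖ := norm_pos_iff.mpr hv0
      set u := ‖v‖⁻¹ • v with hu
      have hu1 : ‖u‖ = 1 := by
        rw [hu, norm_smul, norm_inv, norm_norm, inv_mul_cancel₀ (ne_of_gt hvpos)]
      have humem : Un' n φ u ∈ closure (⋃ n ∈ {m : ℕ | 1 ≤ m}, ⇑(Un' n φ) '' closedBall 0 1) :=
        subset_closure (Set.mem_iUnion₂.mpr ⟨n, hn, ⟨u, by
          rw [mem_closedBall_zero_iff, hu1], rfl⟩⟩)
      have hub : ‖Un' n φ u‖ ≤ K1 := by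
        have := hK1 humem
        rwa [mem_closedBall_zero_iff] at this
      have hveq : v = ‖v‖ • u := by
        rw [hu, smul_smul, mul_inv_cancel₀ (ne_of_gt hvpos), one_smul]
      calc ‖Un' n φ v‖ = ‖Un' n φ (‖v‖ • u)‖ := by rw [← hveq]
        _ = ‖v‖ * ‖Un' n φ u‖ := by
            rw [map_smul, norm_smul, norm_norm]
        _ ≤ ‖v‖ * K1 := mul_le_mul_of_nonneg_left hub hvpos.le
        _ ≤ K2 * ‖v‖ := by
            rw [mul_comm]
            apply mul_le_mul_of_nonneg_right _ hvpos.le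
            rw [hK2def]
            exact le_trans (le_max_left _ _) (by linarith)
  -- pointwise (strong) convergence of the derivatives
  have SC : ∀ v : X, Tendsto (fun n => Un' n φ v) atTop (nhds (U' φ v)) := by
    intro v
    rw [Metric.tendsto_atTop]
    intro ε hε
    set t := min (ρ / (‖v‖ + 1)) (ε / (4 * (M + 1) * (‖v‖ + 1) ^ 2)) with htdef
    have ht0 : 0 < t := lt_min (by positivity) (by positivity)
    have htv : t * ‖v‖ ≤ ρ := by
      have h1 : t ≤ ρ / (‖v‖ + 1) := min_le_left _ _
      have h2 : t * ‖v‖ ≤ (ρ / (‖v‖ + 1)) * (‖v‖ + 1) :=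
        mul_le_mul h1 (by linarith [norm_nonneg v]) (norm_nonneg v) (by positivity)
      rwa [div_mul_cancel₀ _ (by positivity : (‖v‖:ℝ) + 1 ≠ 0)] at h2
    have hquart : M * t * ‖v‖ ^ 2 ≤ ε / 4 := by
      have h2 : t ≤ ε / (4 * (M + 1) * (‖v‖ + 1) ^ 2) := min_le_right _ _
      have h3 : t * (4 * (M + 1) * (‖v‖ + 1) ^ 2) ≤ ε :=
        (le_div_iff₀ (by positivity)).mp h2
      nlinarith [norm_nonneg v, ht0.le, hM0, sq_nonneg (‖v‖ + 1), sq_nonneg ‖v‖,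
        mul_nonneg ht0.le (norm_nonneg v)]
    have hmem1 : φ + t • v ∈ ball φ r := by
      apply hBsubr
      rw [mem_closedBall, dist_eq_norm, add_sub_cancel_left, norm_smul,
        Real.norm_eq_abs, abs_of_pos ht0]
      exact htv
    obtain ⟨N1, hN1⟩ := Metric.tendsto_atTop.mp (hptw _ hmem1) (t * ε / 4) (by positivity)
    obtain ⟨N2, hN2⟩ := Metric.tendsto_atTop.mp (hptw φ hφr) (t * ε / 4) (by positivity)
    refine ⟨max (max N1 N2) 1, fun n hn => ?_⟩
    have hn1 : 1 ≤ n := le_trans (le_max_right _ _) hn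
    have hnN1 : N1 ≤ n := le_trans (le_trans (le_max_left _ _) (le_max_left _ _)) hn
    have hnN2 : N2 ≤ n := le_trans (le_trans (le_max_right _ _) (le_max_left _ _)) hn
    rw [dist_eq_norm]
    have e1 := dq (Un n) (Un' n) (taylorUn n hn1) t ht0 v htv
    have e2 := dq U U' taylorU t ht0 v htv
    have key : Un' n φ v - U' φ v =
        -(t⁻¹ • (Un n (φ + t • v) - Un n φ) - Un' n φ v) +
        t⁻¹ • ((Un n (φ + t • v) - U (φ + t • v)) - (Un n φ - U φ)) +
        (t⁻¹ • (U (φ + t • v) - U φ) - U' φ v) := by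
      module
    rw [key]
    have hB : ‖t⁻¹ • ((Un n (φ + t • v) - U (φ + t • v)) - (Un n φ - U φ))‖ < ε / 2 := by
      rw [norm_smul, norm_inv, Real.norm_eq_abs, abs_of_pos ht0]
      have d1 := hN1 n hnN1
      have d2 := hN2 n hnN2
      rw [dist_eq_norm] at d1 d2
      calc t⁻¹ * ‖(Un n (φ + t • v) - U (φ + t • v)) - (Un n φ - U φ)‖
          ≤ t⁻¹ * (‖Un n (φ + t • v) - U (φ + t • v)‖ + ‖Un n φ - U φ‖) := by
            exact mul_le_mul_of_nonneg_left (norm_sub_le _ _) (by positivity)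
        _ < t⁻¹ * (t * ε / 4 + t * ε / 4) := by
            apply mul_lt_mul_of_pos_left _ (by positivity)
            exact add_lt_add d1 d2
        _ = ε / 2 := by
            rw [show t * ε / 4 + t * ε / 4 = t * (ε / 2) by ring, ← mul_assoc,
              inv_mul_cancel₀ (ne_of_gt ht0), one_mul]
    calc ‖-(t⁻¹ • (Un n (φ + t • v) - Un n φ) - Un' n φ v) +
        t⁻¹ • ((Un n (φ + t • v) - U (φ + t • v)) - (Un n φ - U φ)) +
        (t⁻¹ • (U (φ + t • v) - U φ) - U' φ v)‖
        ≤ ‖-(t⁻¹ • (Un n (φ + t • v) - Un n φ) - Un' n φ v)‖ +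
          ‖t⁻¹ • ((Un n (φ + t • v) - U (φ + t • v)) - (Un n φ - U φ))‖ +
          ‖t⁻¹ • (U (φ + t • v) - U φ) - U' φ v‖ := norm_add₃_le
      _ < ε / 4 + ε / 2 + ε / 4 := by
          rw [norm_neg]
          exact add_lt_add_of_lt_of_le (add_lt_add_of_le_of_lt (le_trans e1 hquart) hB)
            (le_trans e2 hquart)
      _ = ε := by ring
  -- `I - U'(φ)` is bounded below
  have hc1 : ∃ c1 > (0:ℝ), ∀ v : X, c1 * ‖v‖ ≤ ‖v - U' φ v‖ := by
    by_contra hcon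
    push_neg at hcon
    have hex : ∀ k : ℕ, ∃ u : X, ‖u‖ = 1 ∧ ‖u - U' φ u‖ < 1 / (k + 1) := by
      intro k
      obtain ⟨v, hv⟩ := hcon (1 / (k + 1)) (by positivity)
      have hv0 : v ≠ 0 := by
        rintro rfl
        simp at hv
      have hvpos : 0 < ‖v‖ := norm_pos_iff.mpr hv0
      refine ⟨‖v‖⁻¹ • v, ?_, ?_⟩
      · rw [norm_smul, norm_inv, norm_norm, inv_mul_cancel₀ (ne_of_gt hvpos)]
      · have heq : ‖v‖⁻¹ • v - U' φ (‖v‖⁻¹ • v) = ‖v‖⁻¹ • (v - U' φ v) := by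
          rw [map_smul, smul_sub]
        rw [heq, norm_smul, norm_inv, norm_norm]
        rw [inv_mul_lt_iff₀ hvpos]
        calc ‖v - U' φ v‖ < 1 / (k + 1) * ‖v‖ := hv
          _ = ‖v‖ * (1 / (k + 1)) := by ring
    choose u hu1 hu2 using hex
    have hmem : ∀ k, U' φ (u k) ∈ closure (⇑(U' φ) '' closedBall 0 1) := fun k =>
      subset_closure ⟨u k, by rw [mem_closedBall_zero_iff, hu1 k], rfl⟩
    obtain ⟨w, _, σ, hσ, hconv⟩ := hCT.tendsto_subseq hmem
    have hzero : Tendsto (fun j => 1 / ((σ j : ℝ) + 1)) atTop (nhds 0) :=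
      tendsto_one_div_add_atTop_nhds_zero_nat.comp hσ.tendsto_atTop
    have hdiff : Tendsto (fun j => u (σ j) - U' φ (u (σ j))) atTop (nhds 0) :=
      squeeze_zero_norm (fun j => (hu2 (σ j)).le) hzero
    have huconv : Tendsto (fun j => u (σ j)) atTop (nhds w) := by
      have := hdiff.add hconv
      simpa using this
    have hw1 : ‖w‖ = 1 := by
      have h1 : Tendsto (fun j => ‖u (σ j)‖) atTop (nhds ‖w‖) := huconv.norm
      have h2 : (fun j => ‖u (σ j)‖) = fun _ => (1:ℝ) := funext fun j => hu1 _
      rw [h2] at h1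
      exact tendsto_nhds_unique h1 tendsto_const_nhds
    have hTw : U' φ w = w :=
      tendsto_nhds_unique (((U' φ).continuous.tendsto w).comp huconv) hconv
    rw [heig w hTw, norm_zero] at hw1
    norm_num at hw1
  -- uniform bounded-below for `I - Un'(φ)`
  have hc0 : ∃ c0 > (0:ℝ), ∃ N0 : ℕ, 1 ≤ N0 ∧
      ∀ n, N0 ≤ n → ∀ v : X, c0 * ‖v‖ ≤ ‖v - Un' n φ v‖ := by
    by_contra hcon
    push_neg at hcon
    have hex : ∀ k : ℕ, ∃ n : ℕ, max k 1 ≤ n ∧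
        ∃ u : X, ‖u‖ = 1 ∧ ‖u - Un' n φ u‖ < 1 / (k + 1) := by
      intro k
      obtain ⟨n, hn, v, hv⟩ := hcon (1 / (k + 1)) (by positivity) (max k 1) (le_max_right _ _)
      have hv0 : v ≠ 0 := by
        rintro rfl
        simp at hv
      have hvpos : 0 < ‖v‖ := norm_pos_iff.mpr hv0
      refine ⟨n, hn, ‖v‖⁻¹ • v, ?_, ?_⟩
      · rw [norm_smul, norm_inv, norm_norm, inv_mul_cancel₀ (ne_of_gt hvpos)]
      · have heq : ‖v‖⁻¹ • v - Un' n φ (‖v‖⁻¹ • v) = ‖v‖⁻¹ • (v - Un' n φ v) := by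
          rw [map_smul, smul_sub]
        rw [heq, norm_smul, norm_inv, norm_norm]
        rw [inv_mul_lt_iff₀ hvpos]
        calc ‖v - Un' n φ v‖ < 1 / (k + 1) * ‖v‖ := hv
          _ = ‖v‖ * (1 / (k + 1)) := by ring
    choose nn hnn u hu1 hu2 using hex
    have hnn1 : ∀ k, 1 ≤ nn k := fun k => le_trans (le_max_right _ _) (hnn k)
    have hnnk : ∀ k, k ≤ nn k := fun k => le_trans (le_max_left _ _) (hnn k)
    have hmem : ∀ k, Un' (nn k) φ (u k) ∈
        closure (⋃ n ∈ {m : ℕ | 1 ≤ m}, ⇑(Un' n φ) '' closedBall 0 1) := fun k =>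
      subset_closure (Set.mem_iUnion₂.mpr ⟨nn k, hnn1 k,
        ⟨u k, by rw [mem_closedBall_zero_iff, hu1 k], rfl⟩⟩)
    obtain ⟨w, _, σ, hσ, hconv⟩ := hCTn.tendsto_subseq hmem
    have hzero : Tendsto (fun j => 1 / ((σ j : ℝ) + 1)) atTop (nhds 0) :=
      tendsto_one_div_add_atTop_nhds_zero_nat.comp hσ.tendsto_atTop
    have hdiff : Tendsto (fun j => u (σ j) - Un' (nn (σ j)) φ (u (σ j))) atTop (nhds 0) :=
      squeeze_zero_norm (fun j => (hu2 (σ j)).le) hzero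
    have huconv : Tendsto (fun j => u (σ j)) atTop (nhds w) := by
      have := hdiff.add hconv
      simpa using this
    have hw1 : ‖w‖ = 1 := by
      have h1 : Tendsto (fun j => ‖u (σ j)‖) atTop (nhds ‖w‖) := huconv.norm
      have h2 : (fun j => ‖u (σ j)‖) = fun _ => (1:ℝ) := funext fun j => hu1 _
      rw [h2] at h1
      exact tendsto_nhds_unique h1 tendsto_const_nhds
    have hnatTop : Tendsto (fun j => nn (σ j)) atTop atTop :=
      tendsto_atTop_mono (fun j => le_trans (hσ.le_apply) (hnnk (σ j))) tendsto_id
    have hTnw : Tendsto (fun j => Un' (nn (σ j)) φ w) atTop (nhds (U' φ w)) :=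
      (SC w).comp hnatTop
    have hd2 : Tendsto (fun j => Un' (nn (σ j)) φ (u (σ j)) - Un' (nn (σ j)) φ w)
        atTop (nhds 0) := by
      have hb : ∀ j, ‖Un' (nn (σ j)) φ (u (σ j)) - Un' (nn (σ j)) φ w‖ ≤ K2 * ‖u (σ j) - w‖ := by
        intro j
        rw [← map_sub]
        exact hK2 _ (hnn1 _) _
      apply squeeze_zero_norm hb
      · have h5 : Tendsto (fun j => u (σ j) - w) atTop (nhds 0) := by
          have := huconv.sub (tendsto_const_nhds (x := w))
          simpa using this
        have := (h5.norm).const_mul K2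
        simpa using this
    have hgw : Tendsto (fun j => Un' (nn (σ j)) φ (u (σ j))) atTop (nhds (U' φ w)) := by
      have := hTnw.add hd2
      simpa using this
    have hTw : U' φ w = w := tendsto_nhds_unique hgw hconv
    rw [heig w hTw, norm_zero] at hw1
    norm_num at hw1
  obtain ⟨c1, hc1pos, hc1low⟩ := hc1
  obtain ⟨c0, hc0pos, N0, hN01, hc0low⟩ := hc0
  constructor
  · -- φ is an isolated fixed point of U
    refine ⟨min ρ (c1 / (M + 1)), lt_min hρ0 (by positivity), ?_⟩
    intro x hx hUx
    by_contra hne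
    have hxρ : x ∈ closedBall φ ρ := by
      rw [mem_closedBall]
      exact le_of_lt (lt_of_lt_of_le (mem_ball.mp hx) (min_le_left _ _))
    have ht := taylorU x hxρ
    rw [hfix, hUx] at ht
    have hl := hc1low (x - φ)
    have hxφpos : 0 < ‖x - φ‖ := by
      rw [norm_pos_iff, sub_ne_zero]
      exact hne
    have hxφlt : ‖x - φ‖ < c1 / (M + 1) := by
      rw [← dist_eq_norm]
      exact lt_of_lt_of_le (mem_ball.mp hx) (min_le_right _ _)
    have hxφlt' : ‖x - φ‖ * (M + 1) < c1 := (lt_div_iff₀ (by positivity)).mp hxφlt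
    nlinarith [mul_lt_mul_of_pos_right hxφlt' hxφpos]
  · -- fixed points of the `Un`
    set ε : ℝ := min (ρ / 2) (c0 / (4 * (M + 1))) with hεdef
    have hε0 : 0 < ε := lt_min (by positivity) (by positivity)
    have hεnum : ε ≤ c0 / (4 * (M + 1)) := min_le_right _ _
    have hερ : ε ≤ ρ / 2 := min_le_left _ _
    have hεattr : closedBall φ ε ⊆ closedBall φ ρ :=
      closedBall_subset_closedBall (by linarith)
    obtain ⟨N3, hN3⟩ := Metric.tendsto_atTop.mp (hptw φ hφr) (c0 * ε / 4) (by positivity)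
    have main : ∀ n, max N0 N3 ≤ n →
        (∃ y, y ∈ ball φ ε ∧ Un n y = y) ∧
        (∀ x1 ∈ closedBall φ ε, ∀ x2 ∈ closedBall φ ε,
          Un n x1 = x1 → Un n x2 = x2 → x1 = x2) ∧
        (∀ x ∈ closedBall φ ε, Un n x = x → ‖φ - x‖ ≤ (2 / c0) * ‖U φ - Un n φ‖) := by
      intro n hn
      have hnN0 : N0 ≤ n := le_trans (le_max_left _ _) hn
      have hn1 : 1 ≤ n := le_trans hN01 hnN0
      have hnN3 : N3 ≤ n := le_trans (le_max_right _ _) hn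
      set Tn : X →L[ℝ] X := Un' n φ with hTndef
      set Sn : X →L[ℝ] X := ContinuousLinearMap.id ℝ X - Tn with hSndef
      have hSnapp : ∀ v, Sn v = v - Tn v := fun v => rfl
      have hlow : ∀ v, c0 * ‖v‖ ≤ ‖Sn v‖ := fun v => hc0low n hnN0 v
      have hTnc : IsCompact (closure (⇑Tn '' closedBall 0 1)) := by
        apply hCTn.of_isClosed_subset isClosed_closure
        apply closure_mono
        intro z hz
        exact Set.mem_iUnion₂.mpr ⟨n, hn1, hz⟩
      have hsurj := atk_fredholm Tn hTnc hc0pos (fun v => hc0low n hnN0 v)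
      have hker : LinearMap.ker (Sn : X →ₗ[ℝ] X) = ⊥ := by
        rw [LinearMap.ker_eq_bot']
        intro v hv
        have h := hlow v
        rw [show Sn v = 0 from hv, norm_zero] at h
        have : ‖v‖ ≤ 0 := by nlinarith
        rwa [norm_le_zero_iff] at this
      have hrange : LinearMap.range (Sn : X →ₗ[ℝ] X) = ⊤ := by
        rw [LinearMap.range_eq_top]
        intro y2
        obtain ⟨v, hv⟩ := hsurj y2
        exact ⟨v, hv⟩
      set En := ContinuousLinearEquiv.ofBijective Sn hker hrange with hEndef
      have hEnapp : ∀ v, En v = Sn v := fun v => rfl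
      have hWbound : ∀ y2 : X, ‖En.symm y2‖ ≤ c0⁻¹ * ‖y2‖ := by
        intro y2
        have h := hlow (En.symm y2)
        have h2 : Sn (En.symm y2) = y2 := by
          rw [← hEnapp]
          exact En.apply_symm_apply y2
        rw [h2] at h
        exact (le_inv_mul_iff₀ hc0pos).mpr h
      set Gn : X → X := fun x => x - En.symm (x - Un n x) with hGndef
      have hGfix : ∀ x, Un n x = x → Gn x = x := by
        intro x hx
        simp [hGndef, hx]
      have hfixG : ∀ x, Gn x = x → Un n x = x := by
        intro x hx
        have h1 : En.symm (x - Un n x) = 0 := by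
          have := sub_eq_self.mp hx
          exact this
        have h2 : x - Un n x = 0 := by
          have := congrArg En h1
          rwa [En.apply_symm_apply, map_zero] at this
        rw [sub_eq_zero] at h2
        exact h2.symm
      -- contraction estimate
      have hcontr : ∀ x1 ∈ closedBall φ ε, ∀ x2 ∈ closedBall φ ε,
          ‖Gn x1 - Gn x2‖ ≤ 1 / 2 * ‖x1 - x2‖ := by
        intro x1 h1 x2 h2
        have hlipmid : ‖(Un n x1 - Tn x1) - (Un n x2 - Tn x2)‖ ≤ (M * ε) * ‖x1 - x2‖ := by
          apply (convex_closedBall φ ε).norm_image_sub_le_of_norm_hasFDerivWithin_le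
            (f := fun z => Un n z - Tn z) (f' := fun z => Un' n z - Tn) (C := M * ε)
            (fun z hz => ((hdUn1 n hn1 z (hBsub (hεattr hz))).sub
              (Tn.hasFDerivAt)).hasFDerivWithinAt) ?_ h2 h1
          intro z hz
          calc ‖Un' n z - Tn‖ ≤ M * ‖z - φ‖ := dlip n hn1 z (hεattr hz)
            _ ≤ M * ε := by
                apply mul_le_mul_of_nonneg_left _ hM0
                rw [← dist_eq_norm]
                exact mem_closedBall.mp hz
        have hid : Gn x1 - Gn x2 = En.symm ((Un n x1 - Tn x1) - (Un n x2 - Tn x2)) := by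
          set w1 := En.symm (x1 - Un n x1) with hw1def
          set w2 := En.symm (x2 - Un n x2) with hw2def
          have hw1 : Sn w1 = x1 - Un n x1 := by
            rw [hw1def, ← hEnapp]; exact En.apply_symm_apply _
          have hw2 : Sn w2 = x2 - Un n x2 := by
            rw [hw2def, ← hEnapp]; exact En.apply_symm_apply _
          apply En.injective
          rw [En.apply_symm_apply, hEnapp]
          simp only [hGndef]
          rw [← hw1def, ← hw2def, map_sub, map_sub, map_sub, hw1, hw2,
            hSnapp x1, hSnapp x2]
          abel
        rw [hid]
        calc ‖En.symm ((Un n x1 - Tn x1) - (Un n x2 - Tn x2))‖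
            ≤ c0⁻¹ * ((M * ε) * ‖x1 - x2‖) :=
              le_trans (hWbound _) (mul_le_mul_of_nonneg_left hlipmid (by positivity))
          _ ≤ 1 / 2 * ‖x1 - x2‖ := by
              rw [show c0⁻¹ * (M * ε * ‖x1 - x2‖) = (c0⁻¹ * (M * ε)) * ‖x1 - x2‖ by ring]
              apply mul_le_mul_of_nonneg_right _ (norm_nonneg _)
              rw [inv_mul_le_iff₀ hc0pos]
              have h5 : ε * (4 * (M + 1)) ≤ c0 := (le_div_iff₀ (by positivity)).mp hεnum
              nlinarith [mul_nonneg hM0 hε0.le, hε0.le, hM0]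
      have hGφ : ‖Gn φ - φ‖ ≤ c0⁻¹ * ‖U φ - Un n φ‖ := by
        have he : Gn φ - φ = -En.symm (φ - Un n φ) := by
          simp [hGndef]
        rw [he, norm_neg]
        calc ‖En.symm (φ - Un n φ)‖ ≤ c0⁻¹ * ‖φ - Un n φ‖ := hWbound _
          _ = c0⁻¹ * ‖U φ - Un n φ‖ := by rw [hfix]
      have hsmall : ‖U φ - Un n φ‖ < c0 * ε / 4 := by
        have := hN3 n hnN3
        rw [dist_eq_norm, norm_sub_rev] at this
        exact this
      have hGφ' : ‖Gn φ - φ‖ < ε / 4 := by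
        apply lt_of_le_of_lt hGφ
        calc c0⁻¹ * ‖U φ - Un n φ‖ < c0⁻¹ * (c0 * ε / 4) :=
              mul_lt_mul_of_pos_left hsmall (by positivity)
          _ = ε / 4 := by field_simp
      have hφmemε : φ ∈ closedBall φ ε := mem_closedBall_self hε0.le
      have hmaps : Set.MapsTo Gn (closedBall φ ε) (closedBall φ ε) := by
        intro x hx
        rw [mem_closedBall, dist_eq_norm]
        have h1 : ‖Gn x - φ‖ ≤ ‖Gn x - Gn φ‖ + ‖Gn φ - φ‖ := by
          calc ‖Gn x - φ‖ = ‖(Gn x - Gn φ) + (Gn φ - φ)‖ := by abel_nf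
            _ ≤ ‖Gn x - Gn φ‖ + ‖Gn φ - φ‖ := norm_add_le _ _
        have h2 := hcontr x hx φ hφmemε
        have h3 : ‖x - φ‖ ≤ ε := by
          rw [← dist_eq_norm]
          exact mem_closedBall.mp hx
        linarith
      have hlipOn : LipschitzOnWith (1/2 : NNReal) Gn (closedBall φ ε) := by
        apply LipschitzOnWith.of_dist_le_mul
        intro x hx y hy
        rw [dist_eq_norm, dist_eq_norm]
        have := hcontr x hx y hy
        calc ‖Gn x - Gn y‖ ≤ 1 / 2 * ‖x - y‖ := this
          _ = ((1/2 : NNReal) : ℝ) * ‖x - y‖ := by norm_num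
      have hcw : ContractingWith (1/2 : NNReal) (hmaps.restrict Gn _ _) :=
        ⟨by rw [← NNReal.coe_lt_coe]; norm_num, hlipOn.mapsToRestrict hmaps⟩
      obtain ⟨y, hyball, hyfix, -, -⟩ := hcw.exists_fixedPoint'
        Metric.isClosed_closedBall.isComplete hmaps hφmemε (edist_ne_top _ _)
      have hyUn : Un n y = y := hfixG y hyfix
      have hest : ∀ x ∈ closedBall φ ε, Un n x = x → ‖φ - x‖ ≤ (2 / c0) * ‖U φ - Un n φ‖ := by
        intro x hx hfx
        have hGx := hGfix x hfx
        have h1 : ‖x - φ‖ ≤ ‖Gn x - Gn φ‖ + ‖Gn φ - φ‖ := by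
          calc ‖x - φ‖ = ‖(Gn x - Gn φ) + (Gn φ - φ)‖ := by rw [hGx]; abel_nf
            _ ≤ ‖Gn x - Gn φ‖ + ‖Gn φ - φ‖ := norm_add_le _ _
        have h2 := hcontr x hx φ hφmemε
        have h3 : ‖x - φ‖ ≤ 2 * (c0⁻¹ * ‖U φ - Un n φ‖) := by linarith
        rw [norm_sub_rev] at h3
        calc ‖φ - x‖ ≤ 2 * (c0⁻¹ * ‖U φ - Un n φ‖) := h3
          _ = (2 / c0) * ‖U φ - Un n φ‖ := by ring
      have hyopen : y ∈ ball φ ε := by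
        have h1 := hest y hyball hyUn
        rw [mem_ball, dist_eq_norm]
        calc ‖y - φ‖ = ‖φ - y‖ := norm_sub_rev _ _
          _ ≤ (2 / c0) * ‖U φ - Un n φ‖ := h1
          _ < (2 / c0) * (c0 * ε / 4) := by
              apply mul_lt_mul_of_pos_left hsmall (by positivity)
          _ = ε / 2 := by field_simp; ring
          _ < ε := by linarith
      refine ⟨⟨y, hyopen, hyUn⟩, ?_, hest⟩
      intro x1 h1 x2 h2 f1 f2
      have h := hcontr x1 h1 x2 h2
      rw [hGfix x1 f1, hGfix x2 f2] at h
      have : ‖x1 - x2‖ ≤ 0 := by linarith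
      rw [norm_le_zero_iff, sub_eq_zero] at this
      exact this
    have hεrφ : ε < rφ := by
      have : ε ≤ ρ / 2 := hερ
      rw [hρdef] at this
      linarith
    refine ⟨ε, hε0, hεrφ, max N0 N3, lt_of_lt_of_le hN01 (le_max_left _ _), ?_, ?_⟩
    · intro n hn
      obtain ⟨⟨y, hy1, hy2⟩, huniq, hest⟩ := main n hn
      refine ⟨y, ⟨hy1, hy2⟩, ?_⟩
      rintro z ⟨hz1, hz2⟩
      exact huniq z (ball_subset_closedBall hz1) y (ball_subset_closedBall hy1) hz2 hy2
    · refine ⟨2 / c0, by positivity, ?_⟩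
      rintro n hn φn ⟨h1, h2⟩
      exact (main n hn).2.2 φn (ball_subset_closedBall h1) h2
end
end

section
/- Kolmogorov–Riesz–Fréchet theorem: let 1 ≤ p < ∞ and let F be a bounded subset of L^p(ℝ^q, ℂ). For h ∈ ℝ^q let τ_h f := f(· + h). If ‖τ_h f − f‖_{L^p} → 0 as ‖h‖ → 0 uniformly in f ∈ F, then for every measurable set Ω ⊆ ℝ^q of finite measure, the set of restrictions { f|_Ω : f ∈ F } has compact closure in L^p(Ω, ℂ). -/
open MeasureTheory Set Filter
open scoped ENNReal
noncomputable section

namespace KRF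
variable {q : ℕ} {p : ℝ≥0∞}

def cube (r : ℝ) (k : Fin q → ℤ) : Set (Fin q → ℝ) :=
  Set.univ.pi fun i => Set.Ico (r * k i) (r * k i + r)

lemma measurableSet_cube (r : ℝ) (k : Fin q → ℤ) : MeasurableSet (cube r k) :=
  MeasurableSet.univ_pi fun _ => measurableSet_Ico

lemma volume_cube {r : ℝ} (hr : 0 < r) (k : Fin q → ℤ) :
    volume (cube r k) = ENNReal.ofReal r ^ q := by
  rw [cube, volume_pi_pi]
  simp [Real.volume_Ico]

/-- average of `f` over the cube `k`. -/
def avg (r : ℝ) (f : (Fin q → ℝ) → ℂ) (k : Fin q → ℤ) : ℂ :=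
  (r ^ q)⁻¹ • ∫ y in cube r k, f y

lemma finite_cube {r : ℝ} (hr : 0 < r) (k : Fin q → ℤ) :
    IsFiniteMeasure (volume.restrict (cube r k)) :=
  ⟨by rw [Measure.restrict_apply_univ, volume_cube hr]
      exact ENNReal.pow_lt_top ENNReal.ofReal_lt_top⟩

/-- L¹–Lᵖ bound on a set. -/
lemma lintegral_nnnorm_le (hp1 : 1 ≤ p) (hptop : p ≠ ∞) {f : (Fin q → ℝ) → ℂ}
    (s : Set (Fin q → ℝ)) (hf : AEStronglyMeasurable f (volume.restrict s)) :
    ∫⁻ y in s, (‖f y‖₊ : ℝ≥0∞) ≤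
      (∫⁻ y in s, (‖f y‖₊ : ℝ≥0∞) ^ p.toReal) ^ (1 / p.toReal) *
        volume s ^ (1 - 1 / p.toReal) := by
  have hp0 : p ≠ 0 := fun h => by simp [h] at hp1
  have h := eLpNorm_le_eLpNorm_mul_rpow_measure_univ (p := 1) (q := p) hp1 hf
  rw [eLpNorm_one_eq_lintegral_enorm, eLpNorm_eq_lintegral_rpow_enorm_toReal hp0 hptop,
    Measure.restrict_apply_univ] at h
  simp [one_div] at h ⊢
  exact h

lemma pow_enorm_avg_sub_le (hp1 : 1 ≤ p) (hptop : p ≠ ∞) {r : ℝ} (hr : 0 < r)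
    {f : (Fin q → ℝ) → ℂ} (hf : MemLp f p volume) (k : Fin q → ℤ) (x : Fin q → ℝ) :
    (‖avg r f k - f x‖₊ : ℝ≥0∞) ^ p.toReal ≤
      (ENNReal.ofReal r ^ q)⁻¹ * ∫⁻ y in cube r k, (‖f y - f x‖₊ : ℝ≥0∞) ^ p.toReal := by
  haveI := finite_cube hr k
  have ht0 : 0 < p.toReal := ENNReal.toReal_pos (fun h => by simp [h] at hp1) hptop
  set t := p.toReal
  set R : ℝ≥0∞ := ENNReal.ofReal r with hR
  have hRq0 : (R ^ q : ℝ≥0∞) ≠ 0 := by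
    simp [hR, ENNReal.ofReal_eq_zero, not_le, hr, pow_ne_zero_iff]
  have hRqtop : (R ^ q : ℝ≥0∞) ≠ ∞ := by simp [hR, ENNReal.pow_ne_top]
  have hfi : IntegrableOn f (cube r k) volume :=
    ((hf.restrict (cube r k)).mono_exponent hp1).integrable le_rfl
  have hrq : ((0:ℝ) < r ^ q) := by positivity
  have hvol : (volume (cube r k)).toReal = r ^ q := by
    rw [volume_cube hr]; simp [ENNReal.toReal_pow, ENNReal.toReal_ofReal hr.le]
  have h1 : avg r f k - f x = (r ^ q)⁻¹ • ∫ y in cube r k, (f y - f x) := by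
    rw [integral_sub hfi (integrableOn_const (by
      rw [volume_cube hr]; exact (ENNReal.pow_lt_top ENNReal.ofReal_lt_top).ne))]
    rw [setIntegral_const, measureReal_def, hvol, smul_sub, inv_smul_smul₀ hrq.ne', avg]
  have hc : (‖(r ^ q)⁻¹‖₊ : ℝ≥0∞) = (R ^ q)⁻¹ := by
    rw [← enorm_eq_nnnorm, Real.enorm_eq_ofReal (inv_nonneg.2 hrq.le), ENNReal.ofReal_inv_of_pos hrq,
      ENNReal.ofReal_pow hr.le]
  have h2 : (‖avg r f k - f x‖₊ : ℝ≥0∞) ≤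
      (R ^ q)⁻¹ * ∫⁻ y in cube r k, (‖f y - f x‖₊ : ℝ≥0∞) := by
    rw [h1, nnnorm_smul, ENNReal.coe_mul, hc]
    gcongr
    exact enorm_integral_le_lintegral_enorm _
  have h3 : ∫⁻ y in cube r k, (‖f y - f x‖₊ : ℝ≥0∞) ≤
      (∫⁻ y in cube r k, (‖f y - f x‖₊ : ℝ≥0∞) ^ t) ^ (1 / t) * (R ^ q) ^ (1 - 1 / t) := by
    have := lintegral_nnnorm_le (q := q) hp1 hptop (cube r k)
      (f := fun y => f y - f x) ((hf.aestronglyMeasurable.sub aestronglyMeasurable_const).restrict)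
    rwa [volume_cube hr] at this
  set I := ∫⁻ y in cube r k, (‖f y - f x‖₊ : ℝ≥0∞) ^ t with hI
  calc (‖avg r f k - f x‖₊ : ℝ≥0∞) ^ t
      ≤ ((R ^ q)⁻¹ * ∫⁻ y in cube r k, (‖f y - f x‖₊ : ℝ≥0∞)) ^ t :=
        ENNReal.rpow_le_rpow h2 ht0.le
    _ ≤ ((R ^ q)⁻¹ * (I ^ (1 / t) * (R ^ q) ^ (1 - 1 / t))) ^ t := by
        gcongr
    _ = (R ^ q)⁻¹ * I := by
        rw [← ENNReal.rpow_neg_one (R ^ q), ENNReal.mul_rpow_of_nonneg _ _ ht0.le,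
          ENNReal.mul_rpow_of_nonneg _ _ ht0.le, ← ENNReal.rpow_mul, ← ENNReal.rpow_mul,
          ← ENNReal.rpow_mul, one_div, inv_mul_cancel₀ ht0.ne', ENNReal.rpow_one,
          show ((-1) * t : ℝ) = -t by ring,
          show ((1 - t⁻¹) * t : ℝ) = t - 1 by field_simp,
          ← mul_assoc, mul_comm ((R ^ q) ^ (-t : ℝ)) I, mul_assoc,
          ← ENNReal.rpow_add _ _ hRq0 hRqtop,
          show (-t + (t - 1) : ℝ) = -1 by ring, mul_comm]

lemma enorm_avg_le (hp1 : 1 ≤ p) (hptop : p ≠ ∞) {r : ℝ} (hr : 0 < r)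
    {f : (Fin q → ℝ) → ℂ} (hf : AEStronglyMeasurable f volume) (k : Fin q → ℤ) :
    (‖avg r f k‖₊ : ℝ≥0∞) ≤
      (ENNReal.ofReal r ^ q) ^ (-(1 / p.toReal) : ℝ) * eLpNorm f p volume := by
  have hp0 : p ≠ 0 := fun h => by simp [h] at hp1
  have ht0 : 0 < p.toReal := ENNReal.toReal_pos hp0 hptop
  set t := p.toReal
  set R : ℝ≥0∞ := ENNReal.ofReal r with hR
  have hRq0 : (R ^ q : ℝ≥0∞) ≠ 0 := by
    simp [hR, ENNReal.ofReal_eq_zero, not_le, hr, pow_ne_zero_iff]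
  have hRqtop : (R ^ q : ℝ≥0∞) ≠ ∞ := by simp [hR, ENNReal.pow_ne_top]
  have hrq : ((0:ℝ) < r ^ q) := by positivity
  have hc : (‖(r ^ q)⁻¹‖₊ : ℝ≥0∞) = (R ^ q)⁻¹ := by
    rw [← enorm_eq_nnnorm, Real.enorm_eq_ofReal (inv_nonneg.2 hrq.le), ENNReal.ofReal_inv_of_pos hrq,
      ENNReal.ofReal_pow hr.le]
  have h2 : (‖avg r f k‖₊ : ℝ≥0∞) ≤ (R ^ q)⁻¹ * ∫⁻ y in cube r k, (‖f y‖₊ : ℝ≥0∞) := by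
    rw [avg, nnnorm_smul, ENNReal.coe_mul, hc]
    gcongr
    exact enorm_integral_le_lintegral_enorm _
  have h3 : ∫⁻ y in cube r k, (‖f y‖₊ : ℝ≥0∞) ≤
      eLpNorm f p volume * (R ^ q) ^ (1 - 1 / t) := by
    have h4 := lintegral_nnnorm_le (q := q) hp1 hptop (cube r k) hf.restrict
    rw [volume_cube hr] at h4
    refine h4.trans ?_
    gcongr
    simp only [← enorm_eq_nnnorm]
    rw [← eLpNorm_eq_lintegral_rpow_enorm_toReal hp0 hptop]
    exact eLpNorm_mono_measure f Measure.restrict_le_self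
  calc (‖avg r f k‖₊ : ℝ≥0∞) ≤ (R ^ q)⁻¹ * (eLpNorm f p volume * (R ^ q) ^ (1 - 1 / t)) := by
        refine h2.trans ?_; gcongr
    _ = (R ^ q) ^ (-(1 / t) : ℝ) * eLpNorm f p volume := by
        rw [← ENNReal.rpow_neg_one (R ^ q), ← mul_assoc, mul_comm ((R ^ q) ^ (-1 : ℝ)),
          mul_assoc, ← ENNReal.rpow_add _ _ hRq0 hRqtop,
          show ((-1) + (1 - 1 / t) : ℝ) = -(1 / t) by ring, mul_comm]

def idx (r : ℝ) (x : Fin q → ℝ) : Fin q → ℤ := fun i => ⌊x i / r⌋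

lemma mem_cube_iff {r : ℝ} (hr : 0 < r) {x : Fin q → ℝ} {k : Fin q → ℤ} :
    x ∈ cube r k ↔ idx r x = k := by
  simp only [cube, Set.mem_pi, Set.mem_univ, forall_true_left, Set.mem_Ico, idx, funext_iff]
  refine forall_congr' fun i => ?_
  rw [Int.floor_eq_iff]
  rw [le_div_iff₀ hr, div_lt_iff₀ hr]
  constructor
  · rintro ⟨h1, h2⟩; constructor <;> nlinarith
  · rintro ⟨h1, h2⟩; constructor <;> nlinarith

lemma mem_cube_idx {r : ℝ} (hr : 0 < r) (x : Fin q → ℝ) : x ∈ cube r (idx r x) :=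
  (mem_cube_iff hr).2 rfl

lemma idx_measurable {r : ℝ} : Measurable (idx (q := q) r) :=
  measurable_pi_lambda _ fun i => Measurable.floor (by fun_prop)

lemma global_estimate (hp1 : 1 ≤ p) (hptop : p ≠ ∞) {r : ℝ} (hr : 0 < r)
    {f : (Fin q → ℝ) → ℂ} (hf : MemLp f p volume) (hsm : StronglyMeasurable f)
    {ε : ℝ} (hbound : ∀ h : Fin q → ℝ, ‖h‖ < r →
      eLpNorm (fun x => f (x + h) - f x) p volume ≤ ENNReal.ofReal ε) :
    ∫⁻ x, (‖avg r f (idx r x) - f x‖₊ : ℝ≥0∞) ^ p.toReal ≤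
      ENNReal.ofReal 2 ^ q * ENNReal.ofReal ε ^ p.toReal := by
  have hp0 : p ≠ 0 := fun h => by simp [h] at hp1
  have ht0 : 0 < p.toReal := ENNReal.toReal_pos hp0 hptop
  set t := p.toReal
  set R : ℝ≥0∞ := ENNReal.ofReal r with hR
  have hRq0 : (R ^ q : ℝ≥0∞) ≠ 0 := by
    simp [hR, ENNReal.ofReal_eq_zero, not_le, hr, pow_ne_zero_iff]
  have hRqtop : (R ^ q : ℝ≥0∞) ≠ ∞ := by simp [hR, ENNReal.pow_ne_top]
  set U : Set (Fin q → ℝ) := Set.univ.pi fun _ => Set.Ioo (-r) r with hU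
  have hUvol : volume U = ENNReal.ofReal 2 ^ q * R ^ q := by
    rw [hU, volume_pi_pi]
    simp only [Real.volume_Ioo]
    rw [Finset.prod_const]
    rw [show (r - -r : ℝ) = 2 * r by ring, ENNReal.ofReal_mul (by norm_num), mul_pow]
    simp [Finset.card_univ, hR]
  have hGm : Measurable fun z : (Fin q → ℝ) × (Fin q → ℝ) =>
      (‖f (z.1 + z.2) - f z.1‖₊ : ℝ≥0∞) ^ t := by
    have : Measurable fun z : (Fin q → ℝ) × (Fin q → ℝ) => f (z.1 + z.2) - f z.1 :=
      (hsm.measurable.comp (measurable_fst.add measurable_snd)).sub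
        (hsm.measurable.comp measurable_fst)
    exact this.enorm.pow_const _
  have step1 : ∀ x : Fin q → ℝ, ∫⁻ y in cube r (idx r x), (‖f y - f x‖₊ : ℝ≥0∞) ^ t ≤
      ∫⁻ h in U, (‖f (x + h) - f x‖₊ : ℝ≥0∞) ^ t := by
    intro x
    have hTm : MeasurePreserving (fun h : Fin q → ℝ => x + h) volume volume :=
      measurePreserving_add_left volume x
    have hTe : MeasurableEmbedding (fun h : Fin q → ℝ => x + h) :=
      (MeasurableEquiv.addLeft x).measurableEmbedding
    have hsub : (fun h : Fin q → ℝ => x + h) ⁻¹' cube r (idx r x) ⊆ U := by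
      intro h hh
      have hx := mem_cube_idx hr x
      intro i _
      have h1 := hh i (Set.mem_univ i)
      have h2 := hx i (Set.mem_univ i)
      simp only [Set.mem_Ico, Pi.add_apply] at h1 h2
      simp only [Set.mem_Ioo]
      constructor <;> linarith [h1.1, h1.2, h2.1, h2.2]
    calc ∫⁻ y in cube r (idx r x), (‖f y - f x‖₊ : ℝ≥0∞) ^ t
        = ∫⁻ h in (fun h : Fin q → ℝ => x + h) ⁻¹' cube r (idx r x),
            (‖f (x + h) - f x‖₊ : ℝ≥0∞) ^ t :=
          (hTm.setLIntegral_comp_preimage_emb hTe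
            (fun y => (‖f y - f x‖₊ : ℝ≥0∞) ^ t) _).symm
      _ ≤ ∫⁻ h in U, (‖f (x + h) - f x‖₊ : ℝ≥0∞) ^ t := lintegral_mono_set hsub
  calc ∫⁻ x, (‖avg r f (idx r x) - f x‖₊ : ℝ≥0∞) ^ t
      ≤ ∫⁻ x, (R ^ q)⁻¹ * ∫⁻ h in U, (‖f (x + h) - f x‖₊ : ℝ≥0∞) ^ t := by
        refine lintegral_mono fun x => ?_
        refine (pow_enorm_avg_sub_le hp1 hptop hr hf (idx r x) x).trans ?_
        exact mul_le_mul_right (step1 x) _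
    _ = (R ^ q)⁻¹ * ∫⁻ x, ∫⁻ h in U, (‖f (x + h) - f x‖₊ : ℝ≥0∞) ^ t :=
        lintegral_const_mul' _ _ (by simpa using hRq0)
    _ = (R ^ q)⁻¹ * ∫⁻ h in U, ∫⁻ x, (‖f (x + h) - f x‖₊ : ℝ≥0∞) ^ t := by
        rw [lintegral_lintegral_swap hGm.aemeasurable]
    _ ≤ (R ^ q)⁻¹ * ∫⁻ _ in U, ENNReal.ofReal ε ^ t := by
        refine mul_le_mul_right ?_ _
        have hUm : MeasurableSet U := hU ▸ MeasurableSet.univ_pi fun _ => measurableSet_Ioo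
        refine setLIntegral_mono' hUm ?_
        intro h hh
        rw [hU] at hh
        have hhr : ‖h‖ < r := by
          rw [pi_norm_lt_iff hr]
          intro i
          have := hh i (Set.mem_univ i)
          simp only [Set.mem_Ioo] at this
          rw [Real.norm_eq_abs, abs_lt]
          exact ⟨this.1, this.2⟩
        have hb := hbound h hhr
        rw [eLpNorm_eq_lintegral_rpow_enorm_toReal hp0 hptop] at hb
        calc ∫⁻ x, (‖f (x + h) - f x‖₊ : ℝ≥0∞) ^ t
            = ((∫⁻ x, (‖f (x + h) - f x‖₊ : ℝ≥0∞) ^ t) ^ (1/t)) ^ t := by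
              rw [← ENNReal.rpow_mul, one_div, inv_mul_cancel₀ ht0.ne', ENNReal.rpow_one]
          _ ≤ ENNReal.ofReal ε ^ t := ENNReal.rpow_le_rpow hb ht0.le
    _ = ENNReal.ofReal 2 ^ q * ENNReal.ofReal ε ^ t := by
        rw [setLIntegral_const, hUvol]
        calc (R ^ q)⁻¹ * (ENNReal.ofReal ε ^ t * (ENNReal.ofReal 2 ^ q * R ^ q))
            = ENNReal.ofReal 2 ^ q * ENNReal.ofReal ε ^ t * ((R ^ q)⁻¹ * R ^ q) := by ring
          _ = ENNReal.ofReal 2 ^ q * ENNReal.ofReal ε ^ t := by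
              rw [ENNReal.inv_mul_cancel hRq0 hRqtop, mul_one]


lemma eLpNorm_avg_sub (hp1 : 1 ≤ p) (hptop : p ≠ ∞) {r : ℝ} (hr : 0 < r)
    {f : (Fin q → ℝ) → ℂ} (hf : MemLp f p volume) (hsm : StronglyMeasurable f)
    {ε : ℝ} (hbound : ∀ h : Fin q → ℝ, ‖h‖ < r →
      eLpNorm (fun x => f (x + h) - f x) p volume ≤ ENNReal.ofReal ε) :
    eLpNorm (fun x => avg r f (idx r x) - f x) p volume ≤
      ENNReal.ofReal 2 ^ q * ENNReal.ofReal ε := by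
  have hp0 : p ≠ 0 := fun h => by simp [h] at hp1
  have ht0 : 0 < p.toReal := ENNReal.toReal_pos hp0 hptop
  have ht1 : 1 ≤ p.toReal := by
    have := ENNReal.toReal_mono hptop hp1
    simpa using this
  set t := p.toReal
  have h := global_estimate hp1 hptop hr hf hsm hbound
  rw [eLpNorm_eq_lintegral_rpow_enorm_toReal hp0 hptop]
  refine (ENNReal.rpow_le_rpow h (by positivity)).trans ?_
  rw [ENNReal.mul_rpow_of_nonneg _ _ (by positivity), ← ENNReal.rpow_natCast (ENNReal.ofReal 2),
    ← ENNReal.rpow_mul, ← ENNReal.rpow_mul, one_div, mul_inv_cancel₀ ht0.ne', ENNReal.rpow_one]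
  refine mul_le_mul_left ?_ _
  rw [ENNReal.rpow_natCast]
  conv_rhs => rw [← ENNReal.rpow_natCast (ENNReal.ofReal 2)]
  refine ENNReal.rpow_le_rpow_of_exponent_le (by simp [ENNReal.one_le_ofReal, one_le_two]) ?_
  refine mul_le_of_le_one_right (by positivity) ?_
  rw [inv_le_one_iff₀]
  right; exact ht1

lemma coeFn_finset_sum {α ι : Type*} {m : MeasurableSpace α} {μ : Measure α}
    (s : Finset ι) (G : ι → Lp ℂ p μ) :
    ⇑(∑ i ∈ s, G i) =ᵐ[μ] fun x => ∑ i ∈ s, G i x := by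
  classical
  induction s using Finset.induction_on with
  | empty =>
    simp only [Finset.sum_empty]
    filter_upwards [Lp.coeFn_zero ℂ p μ] with x hx using hx
  | insert a s' hnot ih =>
    rw [Finset.sum_insert hnot]
    filter_upwards [Lp.coeFn_add (G a) (∑ i ∈ s', G i), ih] with x hx1 hx2
    rw [hx1]
    simp only [Pi.add_apply, hx2, Finset.sum_insert hnot]


end KRF

set_option maxHeartbeats 1000000 in
open KRF in
/-- **Kolmogorov–Riesz–Fréchet theorem**: let `1 ≤ p < ∞` and let `F` be a bounded family in
`L^p(ℝ^q, ℂ)`.  If `‖τ_h f - f‖_p → 0` as `‖h‖ → 0` uniformly in `f ∈ F`, where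
`τ_h f := f(· + h)`, then for every measurable set `Ω ⊆ ℝ^q` of finite measure the set of
restrictions `{ f|_Ω : f ∈ F }` has compact closure in `L^p(Ω, ℂ)`. -/
theorem kolmogorov_riesz_frechet
    (q : ℕ) (p : ℝ≥0∞) [Fact (1 ≤ p)] (hptop : p ≠ ∞)
    (F : Set ((Fin q → ℝ) → ℂ))
    (hmem : ∀ f ∈ F, MemLp f p volume)
    (hbdd : ∃ M : ℝ, ∀ f ∈ F, eLpNorm f p volume ≤ ENNReal.ofReal M)
    (hunif : ∀ ε > 0, ∃ δ > 0, ∀ h : Fin q → ℝ, ‖h‖ < δ → ∀ f ∈ F,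
      eLpNorm (fun x => f (x + h) - f x) p volume ≤ ENNReal.ofReal ε)
    (Ω : Set (Fin q → ℝ)) (hΩm : MeasurableSet Ω) (hΩfin : volume Ω < ∞) :
    IsCompact (closure {g : Lp ℂ p (volume.restrict Ω) |
      ∃ f ∈ F, (g : (Fin q → ℝ) → ℂ) =ᵐ[volume.restrict Ω] f}) := by
  classical
  have hp1 : 1 ≤ p := Fact.out
  have hp0 : p ≠ 0 := fun h => by simp [h] at hp1
  have ht0 : 0 < p.toReal := ENNReal.toReal_pos hp0 hptop
  have ht1 : 1 ≤ p.toReal := by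
    have := ENNReal.toReal_mono hptop hp1
    simpa using this
  set t := p.toReal with htdef
  obtain ⟨M, hM⟩ := hbdd
  refine TotallyBounded.isCompact_of_isClosed (TotallyBounded.closure ?_) isClosed_closure
  rw [Metric.totallyBounded_iff]
  intro ε hε
  -- parameters
  obtain ⟨δ, hδ0, hδ⟩ := hunif (ε / 2 ^ (q + 2)) (by positivity)
  set r : ℝ := min (δ / 2) 1 with hrdef
  have hr : 0 < r := lt_min (by linarith) one_pos
  set R : ℝ≥0∞ := ENNReal.ofReal r with hRdef
  have hRq0 : (R ^ q : ℝ≥0∞) ≠ 0 := by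
    simp [hRdef, ENNReal.ofReal_eq_zero, not_le, hr, pow_ne_zero_iff]
  have hRqtop : (R ^ q : ℝ≥0∞) ≠ ∞ := by simp [hRdef, ENNReal.pow_ne_top]
  set C : ℝ≥0∞ := (R ^ q) ^ (-(1 / t) : ℝ) with hCdef
  have hCtop : C ≠ ∞ := by
    rw [hCdef, ENNReal.rpow_neg, ENNReal.inv_ne_top]
    simp [ENNReal.rpow_eq_zero_iff, hRq0, hRqtop]
  set B' : ℝ≥0∞ := C * ENNReal.ofReal M with hBdef
  have hBtop : B' ≠ ∞ := ENNReal.mul_ne_top hCtop ENNReal.ofReal_ne_top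
  set B : ℝ := B'.toReal with hBreal
  have hB0 : 0 ≤ B := ENNReal.toReal_nonneg
  -- tail cutoff
  set η : ℝ≥0∞ := (ENNReal.ofReal (ε / 4) / (B' + 1)) ^ t with hηdef
  have hη0 : 0 < η := by
    rw [hηdef]
    apply ENNReal.rpow_pos
    · rw [pos_iff_ne_zero, ne_eq, ENNReal.div_eq_zero_iff]
      push_neg
      constructor
      · simp [ENNReal.ofReal_eq_zero]; linarith
      · exact ENNReal.add_ne_top.2 ⟨hBtop, ENNReal.one_ne_top⟩
    · exact (ENNReal.div_lt_top ENNReal.ofReal_ne_top (by simp)).ne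
  have htail : ∃ n : ℕ, volume (Ω \ Metric.closedBall 0 n) < η := by
    have hmono : Antitone fun n : ℕ => Ω \ Metric.closedBall (0 : Fin q → ℝ) n := by
      intro a b hab
      exact Set.diff_subset_diff_right
        (Metric.closedBall_subset_closedBall (Nat.cast_le.2 hab))
    have hiInter : ⋂ n : ℕ, (Ω \ Metric.closedBall (0 : Fin q → ℝ) n) = ∅ := by
      ext x
      simp only [Set.mem_iInter, Set.mem_empty_iff_false, iff_false, not_forall]
      obtain ⟨n, hn⟩ := exists_nat_ge ‖x‖
      exact ⟨n, fun hx => hx.2 (by simpa [Metric.mem_closedBall, dist_zero_right] using hn)⟩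
    have htends := tendsto_measure_iInter_atTop (μ := volume)
      (s := fun n : ℕ => Ω \ Metric.closedBall 0 n)
      (fun n => (hΩm.diff measurableSet_closedBall).nullMeasurableSet) hmono
      ⟨0, (lt_of_le_of_lt (measure_mono Set.diff_subset) hΩfin).ne⟩
    rw [hiInter, measure_empty] at htends
    exact (htends.eventually_lt_const hη0).exists
  obtain ⟨n, hn⟩ := htail
  set K : Set (Fin q → ℝ) := Metric.closedBall 0 n with hKdef
  have hKm : MeasurableSet K := measurableSet_closedBall
  set m : ℤ := ⌈(n : ℝ) / r⌉ with hmdef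
  set I : Finset (Fin q → ℤ) := Finset.Icc (fun _ => -m) (fun _ => m) with hIdef
  have hidxI : ∀ x : Fin q → ℝ, x ∈ K → idx r x ∈ I := by
    intro x hx
    rw [hIdef, Finset.mem_Icc]
    have hxn : ∀ i, |x i| ≤ n := by
      intro i
      refine le_trans (by exact norm_le_pi_norm x i) ?_
      rwa [hKdef, Metric.mem_closedBall, dist_zero_right] at hx
    constructor
    · intro i
      rw [idx, Int.le_floor]
      push_cast
      calc (-m : ℝ) ≤ -((n : ℝ) / r) := by linarith [Int.le_ceil ((n : ℝ) / r)]
        _ = (-(n : ℝ)) / r := by ring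
        _ ≤ x i / r := by
            gcongr
            exact (abs_le.1 (hxn i)).1
    · intro i
      have h1 : (⌊x i / r⌋ : ℤ) ≤ ⌊(n : ℝ) / r⌋ := by
        apply Int.floor_mono
        gcongr
        exact (abs_le.1 (hxn i)).2
      exact h1.trans (Int.floor_le_ceil _)
  -- finite-dimensional net
  have hcube_fin : ∀ k : Fin q → ℤ, volume.restrict Ω (cube r k ∩ K) ≠ ∞ := by
    intro k
    rw [Measure.restrict_apply ((measurableSet_cube r k).inter hKm)]
    exact (lt_of_le_of_lt (measure_mono Set.inter_subset_right) hΩfin).ne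
  set e : (Fin q → ℤ) → Lp ℂ p (volume.restrict Ω) := fun k =>
    indicatorConstLp p ((measurableSet_cube r k).inter hKm) (hcube_fin k) (1 : ℂ) with hedef
  set ψmap : (I → ℂ) → Lp ℂ p (volume.restrict Ω) :=
    fun c => ∑ k ∈ I.attach, c k • e ↑k with hψmapdef
  have hψcont : Continuous ψmap := by
    refine continuous_finset_sum _ fun k _ => ?_
    exact (continuous_apply k).smul continuous_const
  have hTcomp : IsCompact (ψmap '' Metric.closedBall 0 B) :=
    (isCompact_closedBall _ _).image hψcont
  obtain ⟨s0, hs0fin, hs0sub⟩ :=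
    Metric.totallyBounded_iff.1 hTcomp.totallyBounded (ε / 2) (by linarith)
  refine ⟨s0, hs0fin, ?_⟩
  rintro g ⟨f, hfF, hgf⟩
  -- strongly measurable representative
  have hfmem := hmem f hfF
  have hfa := hfmem.aestronglyMeasurable
  set f' := hfa.mk f with hf'def
  have hsm' : StronglyMeasurable f' := hfa.stronglyMeasurable_mk
  have haef : f =ᵐ[volume] f' := hfa.ae_eq_mk
  have hf'mem : MemLp f' p volume := hfmem.ae_eq haef
  have hf'M : eLpNorm f' p volume ≤ ENNReal.ofReal M := by
    rw [← eLpNorm_congr_ae haef]; exact hM f hfF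
  have htrans : ∀ h : Fin q → ℝ, ‖h‖ < r →
      eLpNorm (fun x => f' (x + h) - f' x) p volume ≤ ENNReal.ofReal (ε / 2 ^ (q + 2)) := by
    intro h hh
    have hhδ : ‖h‖ < δ := lt_of_lt_of_le hh (le_trans (min_le_left _ _) (by linarith))
    refine le_trans (le_of_eq (eLpNorm_congr_ae ?_)) (hδ h hhδ f hfF)
    have hT : MeasurePreserving (fun x : Fin q → ℝ => x + h) volume volume :=
      measurePreserving_add_right volume h
    have hcomp : (fun x : Fin q → ℝ => f (x + h)) =ᵐ[volume] fun x => f' (x + h) :=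
      haef.comp_tendsto hT.quasiMeasurePreserving.tendsto_ae
    filter_upwards [haef, hcomp] with x h1 h2
    rw [h1, h2]
  -- the averaged approximation
  have havgB : ∀ k : Fin q → ℤ, ‖avg r f' k‖ ≤ B := by
    intro k
    have h1 : (‖avg r f' k‖₊ : ℝ≥0∞) ≤ B' := by
      refine (enorm_avg_le hp1 hptop hr hf'mem.aestronglyMeasurable k).trans ?_
      rw [hBdef, hCdef]
      exact mul_le_mul_right hf'M _
    calc ‖avg r f' k‖ = ((‖avg r f' k‖₊ : ℝ≥0∞)).toReal := by simp
      _ ≤ B := ENNReal.toReal_mono hBtop h1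
  set Av : (Fin q → ℝ) → ℂ := fun x => avg r f' (idx r x) with hAvdef
  have hAvm : StronglyMeasurable Av :=
    ((measurable_of_countable (avg r f')).comp idx_measurable).stronglyMeasurable
  have hAvB : ∀ x, ‖Av x‖ ≤ B := fun x => havgB _
  set c : I → ℂ := fun k => avg r f' ↑k with hcdef
  have hcB : c ∈ Metric.closedBall (0 : I → ℂ) B := by
    rw [Metric.mem_closedBall, dist_zero_right]
    rw [pi_norm_le_iff_of_nonneg hB0]
    exact fun k => havgB ↑k
  set ψ := ψmap c with hψdef2
  have hψT : ψ ∈ ψmap '' Metric.closedBall 0 B := ⟨c, hcB, rfl⟩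
  set Gfun : (Fin q → ℝ) → ℂ := K.indicator Av with hGdef
  have hψcoe : ⇑ψ =ᵐ[volume.restrict Ω] Gfun := by
    have h1 := coeFn_finset_sum (p := p) I.attach (fun k => c k • e ↑k)
    have h2 : ∀ k : I, ⇑(c k • e (↑k : Fin q → ℤ)) =ᵐ[volume.restrict Ω]
        fun x => c k • (cube r ↑k ∩ K).indicator (fun _ => (1 : ℂ)) x := by
      intro k
      filter_upwards [Lp.coeFn_smul (c k) (e ↑k),
        indicatorConstLp_coeFn (p := p) (hs := (measurableSet_cube r ↑k).inter hKm)
          (hμs := hcube_fin ↑k) (c := (1 : ℂ))] with x hx1 hx2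
      rw [hx1]
      simp only [Pi.smul_apply]
      exact congrArg (c k • ·) hx2
    filter_upwards [h1, eventually_countable_forall.2 h2] with x hx1 hx2
    show ⇑(∑ k ∈ I.attach, c k • e (↑k : Fin q → ℤ)) x = Gfun x
    rw [hx1, Finset.sum_congr rfl fun k _ => hx2 k, hGdef]
    by_cases hxK : x ∈ K
    · rw [Set.indicator_of_mem hxK]
      have hkI := hidxI x hxK
      rw [Finset.sum_eq_single (⟨idx r x, hkI⟩ : I)]
      · have hxmem : x ∈ cube r (idx r x) ∩ K := ⟨mem_cube_idx hr x, hxK⟩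
        rw [Set.indicator_of_mem hxmem, hcdef, smul_eq_mul, mul_one, hAvdef]
      · intro b _ hb
        have hbne : (↑b : Fin q → ℤ) ≠ idx r x := by
          intro hc'
          exact hb (Subtype.ext hc')
        rw [Set.indicator_of_notMem, smul_zero]
        intro hmem'
        exact hbne (((mem_cube_iff hr).1 hmem'.1).symm)
      · intro hnotin
        exact absurd (Finset.mem_attach _ _) hnotin
    · rw [Set.indicator_of_notMem hxK]
      refine Finset.sum_eq_zero fun k _ => ?_
      rw [Set.indicator_of_notMem (fun hmem' => hxK hmem'.2), smul_zero]
  -- distance estimate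
  have hgψ : eLpNorm (⇑g - ⇑ψ) p (volume.restrict Ω) ≤ ENNReal.ofReal (ε / 2) := by
    have hcongr : ⇑g - ⇑ψ =ᵐ[volume.restrict Ω] fun x => f x - Gfun x := by
      filter_upwards [hgf, hψcoe] with x h1 h2
      simp only [Pi.sub_apply, h1, h2]
    have hsplit : (fun x => f x - Gfun x) =
        (fun x => f x - Av x) + fun x => Av x - Gfun x := by
      funext x
      simp only [Pi.add_apply]
      ring
    rw [eLpNorm_congr_ae hcongr, hsplit]
    have haem1 : AEStronglyMeasurable (fun x => f x - Av x) (volume.restrict Ω) :=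
      hfa.restrict.sub hAvm.aestronglyMeasurable.restrict
    have haem2 : AEStronglyMeasurable (fun x => Av x - Gfun x) (volume.restrict Ω) :=
      hAvm.aestronglyMeasurable.restrict.sub
        ((hAvm.indicator hKm).aestronglyMeasurable.restrict)
    refine (eLpNorm_add_le haem1 haem2 hp1).trans ?_
    have hterm1 : eLpNorm (fun x => f x - Av x) p (volume.restrict Ω) ≤
        ENNReal.ofReal (ε / 4) := by
      refine le_trans (eLpNorm_mono_measure _ Measure.restrict_le_self) ?_
      have heq : (fun x => f x - Av x) =ᵐ[volume] f' - Av :=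
        haef.mono fun x hx => by simp only [Pi.sub_apply]; rw [hx]
      rw [eLpNorm_congr_ae heq, eLpNorm_sub_comm]
      have heq2 : eLpNorm (Av - f') p volume =
          eLpNorm (fun x => avg r f' (idx r x) - f' x) p volume :=
        eLpNorm_congr_ae (Filter.EventuallyEq.of_eq rfl)
      rw [heq2]
      refine (eLpNorm_avg_sub hp1 hptop hr hf'mem hsm' htrans).trans ?_
      rw [← ENNReal.ofReal_pow (by norm_num : (0:ℝ) ≤ 2), ← ENNReal.ofReal_mul (by positivity)]
      refine ENNReal.ofReal_le_ofReal ?_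
      have h2q : (2:ℝ) ^ (q + 2) = 2 ^ q * 4 := by rw [pow_add]; norm_num
      rw [h2q]
      refine le_of_eq ?_
      have hq2 : (2:ℝ) ^ q ≠ 0 := by positivity
      field_simp
    have hterm2 : eLpNorm (fun x => Av x - Gfun x) p (volume.restrict Ω) ≤
        ENNReal.ofReal (ε / 4) := by
      have hAG : (fun x => Av x - Gfun x) = Kᶜ.indicator Av := by
        funext x
        rw [hGdef]
        by_cases hxK : x ∈ K
        · rw [Set.indicator_of_mem hxK, Set.indicator_of_notMem (by simpa using hxK), sub_self]
        · rw [Set.indicator_of_notMem hxK, Set.indicator_of_mem (Set.mem_compl hxK), sub_zero]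
      rw [hAG, eLpNorm_indicator_eq_eLpNorm_restrict hKm.compl,
        Measure.restrict_restrict hKm.compl]
      refine (eLpNorm_le_of_ae_bound (C := B) (ae_of_all _ hAvB)).trans ?_
      rw [Measure.restrict_apply_univ]
      have hvol : volume (Kᶜ ∩ Ω) < η := by
        rw [Set.inter_comm, ← Set.diff_eq]
        exact hn
      calc volume (Kᶜ ∩ Ω) ^ p.toReal⁻¹ * ENNReal.ofReal B
          ≤ η ^ t⁻¹ * (B' + 1) := by
            gcongr <;>
              first
                | exact hvol.le
                | exact le_trans ENNReal.ofReal_toReal_le le_self_add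
        _ ≤ ENNReal.ofReal (ε / 4) := by
            rw [hηdef, ← ENNReal.rpow_mul, mul_inv_cancel₀ ht0.ne', ENNReal.rpow_one,
              div_eq_mul_inv, mul_assoc,
              ENNReal.inv_mul_cancel (by simp) (ENNReal.add_ne_top.2 ⟨hBtop, ENNReal.one_ne_top⟩),
              mul_one]
    refine (add_le_add hterm1 hterm2).trans ?_
    rw [← ENNReal.ofReal_add (by positivity) (by positivity)]
    exact ENNReal.ofReal_le_ofReal (by linarith)
  obtain ⟨y, hy, hball⟩ := Set.mem_iUnion₂.1 (hs0sub hψT)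
  refine Set.mem_iUnion₂.2 ⟨y, hy, ?_⟩
  rw [Metric.mem_ball] at hball ⊢
  have hdist : dist g ψ ≤ ε / 2 := by
    rw [Lp.dist_def]
    exact ENNReal.toReal_le_of_le_ofReal (by positivity) hgψ
  calc dist g y ≤ dist g ψ + dist ψ y := dist_triangle _ _ _
    _ < ε := by linarith
end
end

section
/- For every x ∈ L¹([a,b],ℂ) and every n ≥ 1, ‖π_n(x) − x‖₁ ≤ 2 w₁(x, h_n); consequently π_n(x) → x in L¹([a,b],ℂ) as n → ∞ for every x ∈ L¹([a,b],ℂ). -/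
open MeasureTheory Set Filter
noncomputable section

/-- `w₁(x,h)`: the oscillation of `x ∈ L¹([a,b],ℂ)` relative to the parameter `h`, where
`x̃` denotes the extension of `x` by zero outside `[a,b]`. -/
def w1 (a b : ℝ) (x : ℝ → ℂ) (h : ℝ) : ℝ :=
  sSup ((fun u => ∫ v in Icc a b,
    ‖Set.indicator (Icc a b) x (v + u) - Set.indicator (Icc a b) x v‖) '' Icc (-|h|) |h|)

/-- the grid node `t_{n,i} := a + i·h_n` with `h_n := (b-a)/n`. -/
def tnode (a b : ℝ) (n : ℕ) (i : ℕ) : ℝ := a + i * ((b - a) / n)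

/-- the cell mean `c_{n,i}(x) := (1/h_n) ∫_{t_{n,i-1}}^{t_{n,i}} x(v) dv`. -/
def cmean (a b : ℝ) (n : ℕ) (x : ℝ → ℂ) (i : ℕ) : ℂ :=
  (((b - a) / n : ℝ) : ℂ)⁻¹ * ∫ v in (tnode a b n (i - 1))..(tnode a b n i), x v

/-- a representative of the step function `π_n(x)`. -/
def pirep (a b : ℝ) (n : ℕ) (x : ℝ → ℂ) : ℝ → ℂ := fun t =>
  ∑ i ∈ Finset.Icc 1 n, Set.indicator (Ico (tnode a b n (i - 1)) (tnode a b n i))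
    (fun _ => cmean a b n x i) t

/-! ### Auxiliary lemmas -/

section Aux
variable {a b : ℝ} {x : ℝ → ℂ} {n : ℕ}

lemma hn_pos (hab : a < b) (hn : 1 ≤ n) : 0 < (b - a) / n :=
  div_pos (by linarith) (by exact_mod_cast hn)

lemma tnode_zero (a b : ℝ) (n : ℕ) : tnode a b n 0 = a := by simp [tnode]

lemma tnode_last (a b : ℝ) (n : ℕ) (hn : 1 ≤ n) : tnode a b n n = b := by
  have : (n : ℝ) ≠ 0 := by positivity
  simp only [tnode]
  rw [mul_div_cancel₀ _ this]
  ring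

lemma tnode_mono (hab : a < b) (hn : 1 ≤ n) : StrictMono (tnode a b n) := by
  have h := hn_pos hab hn
  intro i j hij
  simp only [tnode]
  have : (i : ℝ) < j := by exact_mod_cast hij
  nlinarith

lemma tnode_sub (a b : ℝ) (n : ℕ) {i : ℕ} (hi : 1 ≤ i) :
    tnode a b n i = tnode a b n (i - 1) + (b - a) / n := by
  conv_lhs => rw [show i = (i - 1) + 1 by omega]
  simp [tnode]
  ring

lemma Ico_eq_biUnion (hab : a < b) (hn : 1 ≤ n) :
    Ico a b = ⋃ i ∈ Finset.Icc 1 n, Ico (tnode a b n (i - 1)) (tnode a b n i) := by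
  have key : ∀ m : ℕ, m ≤ n →
      Ico a (tnode a b n m) = ⋃ i ∈ Finset.Icc 1 m, Ico (tnode a b n (i - 1)) (tnode a b n i) := by
    intro m hm
    induction m with
    | zero => simp [tnode_zero]
    | succ k ih =>
      have hk := ih (Nat.le_of_succ_le hm)
      have h1 : Finset.Icc 1 (k + 1) = insert (k + 1) (Finset.Icc 1 k) := by
        ext j; simp [Nat.lt_succ_iff]; omega
      rw [h1, Finset.set_biUnion_insert, ← hk]
      have h2 : a ≤ tnode a b n k := by
        rcases Nat.eq_zero_or_pos k with h | h
        · simp [h, tnode_zero]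
        · exact le_of_lt (by simpa [tnode_zero] using tnode_mono hab hn (show 0 < k from h))
      have h3 : tnode a b n k ≤ tnode a b n (k + 1) :=
        (tnode_mono hab hn (Nat.lt_succ_self k)).le
      rw [Set.union_comm]
      simpa using (Ico_union_Ico_eq_Ico h2 h3).symm
  have := key n le_rfl
  rwa [tnode_last a b n hn] at this

lemma cells_disjoint (hab : a < b) (hn : 1 ≤ n) :
    (↑(Finset.Icc 1 n) : Set ℕ).PairwiseDisjoint
      (fun i => Ico (tnode a b n (i - 1)) (tnode a b n i)) := by
  have key : ∀ i j : ℕ, i < j →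
      Disjoint (Ico (tnode a b n (i - 1)) (tnode a b n i))
        (Ico (tnode a b n (j - 1)) (tnode a b n j)) := by
    intro i j hij
    rw [Set.disjoint_left]
    rintro t ⟨h1, h2⟩ ⟨h3, h4⟩
    have hij' : i ≤ j - 1 := by omega
    have : tnode a b n i ≤ tnode a b n (j - 1) := (tnode_mono hab hn).monotone hij'
    linarith
  intro i hi j hj hij
  rcases lt_or_gt_of_ne hij with h | h
  · exact key i j h
  · exact (key j i h).symm

lemma pirep_eq_cmean (hab : a < b) (hn : 1 ≤ n) {i : ℕ} (hi : i ∈ Finset.Icc 1 n) {t : ℝ}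
    (ht : t ∈ Ico (tnode a b n (i - 1)) (tnode a b n i)) :
    pirep a b n x t = cmean a b n x i := by
  rw [pirep]
  rw [Finset.sum_eq_single_of_mem i hi]
  · exact Set.indicator_of_mem ht _
  · intro j hj hne
    apply Set.indicator_of_notMem
    intro htj
    exact Set.disjoint_left.1 (cells_disjoint hab hn hj hi hne) htj ht

lemma cell_subset (hab : a < b) (hn : 1 ≤ n) {i : ℕ} (hi : i ∈ Finset.Icc 1 n) :
    Icc (tnode a b n (i - 1)) (tnode a b n i) ⊆ Icc a b := by
  simp only [Finset.mem_Icc] at hi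
  apply Icc_subset_Icc
  · have : tnode a b n 0 ≤ tnode a b n (i - 1) := (tnode_mono hab hn).monotone (Nat.zero_le _)
    simpa [tnode] using this
  · have : tnode a b n i ≤ tnode a b n n := (tnode_mono hab hn).monotone hi.2
    calc tnode a b n i ≤ tnode a b n n := this
    _ = b := tnode_last a b n hn

/-! ### `w1` basics -/

lemma xt_integrable (hx : IntegrableOn x (Icc a b)) :
    Integrable (Set.indicator (Icc a b) x) volume :=
  hx.integrable_indicator measurableSet_Icc

lemma shift_integrable (hx : IntegrableOn x (Icc a b)) (u : ℝ) :
    Integrable (fun v => Set.indicator (Icc a b) x (v + u)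
      - Set.indicator (Icc a b) x v) volume :=
  ((xt_integrable hx).comp_add_right u).sub (xt_integrable hx)

/-- the integral appearing in the definition of `w1`. -/
def Tosc (a b : ℝ) (x : ℝ → ℂ) (u : ℝ) : ℝ :=
  ∫ v in Icc a b, ‖Set.indicator (Icc a b) x (v + u) - Set.indicator (Icc a b) x v‖

lemma w1_def (a b : ℝ) (x : ℝ → ℂ) (h : ℝ) :
    w1 a b x h = sSup (Tosc a b x '' Icc (-|h|) |h|) := rfl

lemma Tosc_le_integral (hx : IntegrableOn x (Icc a b)) (u : ℝ) :
    Tosc a b x u ≤ ∫ v, ‖Set.indicator (Icc a b) x (v + u) - Set.indicator (Icc a b) x v‖ :=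
  setIntegral_le_integral ((shift_integrable hx u).norm)
    (Eventually.of_forall fun v => norm_nonneg _)

lemma integral_shift_le (hx : IntegrableOn x (Icc a b)) (u : ℝ) :
    (∫ v, ‖Set.indicator (Icc a b) x (v + u) - Set.indicator (Icc a b) x v‖)
      ≤ 2 * ∫ v, ‖Set.indicator (Icc a b) x v‖ := by
  have h1 : (∫ v, ‖Set.indicator (Icc a b) x (v + u) - Set.indicator (Icc a b) x v‖)
      ≤ ∫ v, (‖Set.indicator (Icc a b) x (v + u)‖ + ‖Set.indicator (Icc a b) x v‖) := by
    apply integral_mono ((shift_integrable hx u).norm)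
      (((xt_integrable hx).comp_add_right u).norm.add ((xt_integrable hx).norm))
    intro v; exact norm_sub_le _ _
  have h2 : (∫ v, (‖Set.indicator (Icc a b) x (v + u)‖ + ‖Set.indicator (Icc a b) x v‖))
      = (∫ v, ‖Set.indicator (Icc a b) x (v + u)‖) + ∫ v, ‖Set.indicator (Icc a b) x v‖ :=
    integral_add ((xt_integrable hx).comp_add_right u).norm ((xt_integrable hx).norm)
  have h3 : (∫ v, ‖Set.indicator (Icc a b) x (v + u)‖)
      = ∫ v, ‖Set.indicator (Icc a b) x v‖ :=
    integral_add_right_eq_self (fun v => ‖Set.indicator (Icc a b) x v‖) u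
  rw [h2, h3] at h1; linarith

lemma Tosc_bdd (hx : IntegrableOn x (Icc a b)) (u : ℝ) :
    Tosc a b x u ≤ 2 * ∫ v, ‖Set.indicator (Icc a b) x v‖ :=
  (Tosc_le_integral hx u).trans (integral_shift_le hx u)

lemma w1_bddAbove (hx : IntegrableOn x (Icc a b)) (h : ℝ) :
    BddAbove (Tosc a b x '' Icc (-|h|) |h|) :=
  ⟨2 * ∫ v, ‖Set.indicator (Icc a b) x v‖, by
    rintro - ⟨u, -, rfl⟩; exact Tosc_bdd hx u⟩

lemma Tosc_zero (a b : ℝ) (x : ℝ → ℂ) : Tosc a b x 0 = 0 := by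
  simp [Tosc]

lemma w1_nonneg (hx : IntegrableOn x (Icc a b)) (h : ℝ) : 0 ≤ w1 a b x h := by
  rw [w1_def, ← Tosc_zero a b x]
  exact le_csSup (w1_bddAbove hx h) ⟨0, by simp [abs_nonneg], rfl⟩

lemma Tosc_le_w1 (hx : IntegrableOn x (Icc a b)) {h u : ℝ} (hu : u ∈ Icc (-|h|) |h|) :
    Tosc a b x u ≤ w1 a b x h :=
  le_csSup (w1_bddAbove hx h) ⟨u, hu, rfl⟩

lemma w1_le {h ε : ℝ}
    (hε : ∀ u, |u| ≤ |h| → Tosc a b x u ≤ ε) : w1 a b x h ≤ ε := by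
  apply csSup_le (Set.Nonempty.image _ (nonempty_Icc.mpr
    ((neg_nonpos.2 (abs_nonneg h)).trans (abs_nonneg h))))
  rintro - ⟨u, hu, rfl⟩
  exact hε u (abs_le.2 ⟨hu.1, hu.2⟩)

/-! ### The key cell estimate -/

set_option maxHeartbeats 1000000 in
lemma cell_bound (hab : a < b) (hx : IntegrableOn x (Icc a b)) (hn : 1 ≤ n)
    {i : ℕ} (hi : i ∈ Finset.Icc 1 n) {t : ℝ}
    (ht : t ∈ Ico (tnode a b n (i - 1)) (tnode a b n i)) :
    (‖cmean a b n x i - x t‖₊ : ENNReal) ≤ (ENNReal.ofReal ((b - a) / n))⁻¹ *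
      ∫⁻ u in Icc (-((b - a) / n)) ((b - a) / n),
        ‖Set.indicator (Icc a b) x (t + u) - Set.indicator (Icc a b) x t‖₊ := by
  set h : ℝ := (b - a) / n with hh
  have h0 : 0 < h := hn_pos hab hn
  have hsubIcc : Icc (tnode a b n (i - 1)) (tnode a b n i) ⊆ Icc a b :=
    cell_subset hab hn hi
  simp only [Finset.mem_Icc] at hi
  have hts : tnode a b n i = tnode a b n (i - 1) + h := tnode_sub a b n hi.1
  have hle : tnode a b n (i - 1) ≤ tnode a b n i := by rw [hts]; linarith
  have htmem : t ∈ Icc a b := hsubIcc (Ico_subset_Icc_self ht)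
  have hxint : IntegrableOn x (Ioc (tnode a b n (i - 1)) (tnode a b n i)) :=
    hx.mono_set (Ioc_subset_Icc_self.trans hsubIcc)
  have hconst : IntegrableOn (fun _ : ℝ => x t) (Ioc (tnode a b n (i - 1)) (tnode a b n i)) := by
    exact integrableOn_const measure_Ioc_lt_top.ne
  have hvol : (volume (Ioc (tnode a b n (i - 1)) (tnode a b n i))).toReal = h := by
    rw [Real.volume_Ioc, hts, ENNReal.toReal_ofReal (by linarith)]
    ring
  have step2 : cmean a b n x i - x t
      = ((h : ℂ))⁻¹ * ∫ v in Ioc (tnode a b n (i - 1)) (tnode a b n i), (x v - x t) := by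
    rw [integral_sub hxint hconst, setIntegral_const, measureReal_def, hvol]
    rw [cmean, intervalIntegral.integral_of_le hle]
    rw [mul_sub]
    congr 1
    rw [Complex.real_smul]
    rw [← mul_assoc, inv_mul_cancel₀ (by exact_mod_cast h0.ne'), one_mul]
  have step3 : ‖cmean a b n x i - x t‖
      ≤ h⁻¹ * ∫ v in Ioc (tnode a b n (i - 1)) (tnode a b n i), ‖x v - x t‖ := by
    rw [step2, norm_mul]
    gcongr
    · rw [norm_inv, Complex.norm_real, Real.norm_eq_abs, abs_of_pos h0]
    · exact norm_integral_le_integral_norm _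
  have hconv : (‖cmean a b n x i - x t‖₊ : ENNReal)
      ≤ (ENNReal.ofReal h)⁻¹ *
        ∫⁻ v in Ioc (tnode a b n (i - 1)) (tnode a b n i), ‖x v - x t‖₊ := by
    rw [← enorm_eq_nnnorm, ← ofReal_norm]
    calc ENNReal.ofReal ‖cmean a b n x i - x t‖
        ≤ ENNReal.ofReal (h⁻¹ * ∫ v in Ioc (tnode a b n (i - 1)) (tnode a b n i), ‖x v - x t‖) :=
          ENNReal.ofReal_le_ofReal step3
      _ = ENNReal.ofReal h⁻¹ *
          ENNReal.ofReal (∫ v in Ioc (tnode a b n (i - 1)) (tnode a b n i), ‖x v - x t‖) :=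
          ENNReal.ofReal_mul (by positivity)
      _ ≤ (ENNReal.ofReal h)⁻¹ *
          ∫⁻ v in Ioc (tnode a b n (i - 1)) (tnode a b n i), ‖x v - x t‖₊ := by
          rw [ENNReal.ofReal_inv_of_pos h0]
          gcongr
          have hsm : AEStronglyMeasurable (fun v => x v - x t)
              (volume.restrict (Ioc (tnode a b n (i - 1)) (tnode a b n i))) :=
            hxint.aestronglyMeasurable.sub aestronglyMeasurable_const
          rw [integral_norm_eq_lintegral_enorm hsm]
          exact ENNReal.ofReal_toReal_le
  refine hconv.trans (mul_le_mul_right ?_ _)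
  have step6 : (∫⁻ v in Ioc (tnode a b n (i - 1)) (tnode a b n i), ‖x v - x t‖₊)
      = ∫⁻ v in Ioc (tnode a b n (i - 1)) (tnode a b n i),
          ‖Set.indicator (Icc a b) x v - Set.indicator (Icc a b) x t‖₊ := by
    apply setLIntegral_congr_fun measurableSet_Ioc
    intro v hv
    dsimp only
    rw [Set.indicator_of_mem (hsubIcc (Ioc_subset_Icc_self hv)),
      Set.indicator_of_mem htmem]
  rw [step6]
  have step7 : Ioc (tnode a b n (i - 1)) (tnode a b n i) ⊆ Icc (t - h) (t + h) := by
    intro v hv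
    simp only [mem_Ioc] at hv
    simp only [mem_Icc]
    simp only [mem_Ico] at ht
    constructor <;> [nlinarith [hts]; nlinarith [hts]]
  refine (lintegral_mono_set step7).trans ?_
  set g : ℝ → ENNReal := fun v => ‖Set.indicator (Icc a b) x v - Set.indicator (Icc a b) x t‖₊
      with hg
  have heq : (∫⁻ v in Icc (t - h) (t + h), g v) = ∫⁻ u in Icc (-h) h, g (t + u) := by
    rw [← lintegral_indicator measurableSet_Icc, ← lintegral_indicator measurableSet_Icc]
    rw [← lintegral_add_right_eq_self (fun v => (Icc (t - h) (t + h)).indicator g v) t]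
    congr 1
    funext u
    by_cases hu : u ∈ Icc (-h) h
    · rw [Set.indicator_of_mem hu, Set.indicator_of_mem]
      · rw [add_comm]
      · simp only [mem_Icc] at hu ⊢; constructor <;> linarith [hu.1, hu.2]
    · rw [Set.indicator_of_notMem hu, Set.indicator_of_notMem]
      simp only [mem_Icc] at hu ⊢
      intro hcon
      exact hu ⟨by linarith [hcon.1], by linarith [hcon.2]⟩
  exact le_of_eq heq

/-! ### The main quantitative bound -/

set_option maxHeartbeats 1000000 in
lemma main_bound (hab : a < b) (hx : IntegrableOn x (Icc a b)) (hn : 1 ≤ n) :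
    (∫ v in Icc a b, ‖pirep a b n x v - x v‖) ≤ 2 * w1 a b x ((b - a) / n) := by
  set h : ℝ := (b - a) / n with hh
  have h0 : 0 < h := hn_pos hab hn
  have hpirep_m : Measurable (pirep a b n x) := by
    apply Finset.measurable_sum
    intro i _
    exact measurable_const.indicator measurableSet_Ico
  have hsub_aesm : AEStronglyMeasurable (fun v => pirep a b n x v - x v)
      (volume.restrict (Icc a b)) :=
    hpirep_m.aestronglyMeasurable.sub hx.aestronglyMeasurable
  have hxt : Integrable (Set.indicator (Icc a b) x) volume := xt_integrable hx
  -- the AE-measurability needed for Tonelli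
  have hGm : AEMeasurable (Function.uncurry fun (t u : ℝ) =>
      (‖Set.indicator (Icc a b) x (t + u) - Set.indicator (Icc a b) x t‖₊ : ENNReal))
      ((volume.restrict (Icc a b)).prod (volume.restrict (Icc (-h) h))) := by
    have ham : AEMeasurable (Set.indicator (Icc a b) x) volume :=
      hxt.aestronglyMeasurable.aemeasurable
    have qmp : Measure.QuasiMeasurePreserving (fun p : ℝ × ℝ => p.1 + p.2)
        ((volume : Measure ℝ).prod volume) volume := by
      have h1 := (measurePreserving_add_prod (volume : Measure ℝ)
        (volume : Measure ℝ)).quasiMeasurePreserving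
      exact Measure.quasiMeasurePreserving_fst.comp h1
    have h1 : AEMeasurable (fun p : ℝ × ℝ => Set.indicator (Icc a b) x (p.1 + p.2))
        ((volume : Measure ℝ).prod volume) := ham.comp_quasiMeasurePreserving qmp
    have h2 : AEMeasurable (fun p : ℝ × ℝ => Set.indicator (Icc a b) x p.1)
        ((volume : Measure ℝ).prod volume) :=
      ham.comp_quasiMeasurePreserving Measure.quasiMeasurePreserving_fst
    have hac : ((volume.restrict (Icc a b)).prod (volume.restrict (Icc (-h) h)))
        ≪ ((volume : Measure ℝ).prod volume) :=
      Measure.AbsolutelyContinuous.prod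
        (Measure.absolutelyContinuous_of_le Measure.restrict_le_self)
        (Measure.absolutelyContinuous_of_le Measure.restrict_le_self)
    exact ((h1.sub h2).aestronglyMeasurable.enorm).mono_ac hac
  -- main chain in lintegral
  have key : (∫⁻ v in Icc a b, ‖pirep a b n x v - x v‖₊)
      ≤ ENNReal.ofReal (2 * w1 a b x h) := by
    have c1 : (∫⁻ v in Icc a b, ‖pirep a b n x v - x v‖₊)
        = ∫⁻ v in Ico a b, ‖pirep a b n x v - x v‖₊ :=
      (setLIntegral_congr Ico_ae_eq_Icc).symm
    have c2 : (∫⁻ v in Ico a b, ‖pirep a b n x v - x v‖₊)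
        = ∑ i ∈ Finset.Icc 1 n,
            ∫⁻ v in Ico (tnode a b n (i - 1)) (tnode a b n i), ‖pirep a b n x v - x v‖₊ := by
      rw [Ico_eq_biUnion hab hn]
      exact lintegral_biUnion_finset (cells_disjoint hab hn) (fun i _ => measurableSet_Ico) _
    have c3 : ∀ i ∈ Finset.Icc 1 n,
        (∫⁻ v in Ico (tnode a b n (i - 1)) (tnode a b n i), ‖pirep a b n x v - x v‖₊)
        ≤ ∫⁻ v in Ico (tnode a b n (i - 1)) (tnode a b n i),
            (ENNReal.ofReal h)⁻¹ * ∫⁻ u in Icc (-h) h,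
              ‖Set.indicator (Icc a b) x (v + u) - Set.indicator (Icc a b) x v‖₊ := by
      intro i hi
      apply setLIntegral_mono' measurableSet_Ico
      intro t ht
      rw [pirep_eq_cmean hab hn hi ht]
      exact cell_bound hab hx hn hi ht
    have c4 : (∑ i ∈ Finset.Icc 1 n,
          ∫⁻ v in Ico (tnode a b n (i - 1)) (tnode a b n i),
            (ENNReal.ofReal h)⁻¹ * ∫⁻ u in Icc (-h) h,
              ‖Set.indicator (Icc a b) x (v + u) - Set.indicator (Icc a b) x v‖₊)
        = ∫⁻ v in Icc a b,
            (ENNReal.ofReal h)⁻¹ * ∫⁻ u in Icc (-h) h,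
              ‖Set.indicator (Icc a b) x (v + u) - Set.indicator (Icc a b) x v‖₊ := by
      rw [← lintegral_biUnion_finset (cells_disjoint hab hn) (fun i _ => measurableSet_Ico),
        ← Ico_eq_biUnion hab hn]
      exact setLIntegral_congr Ico_ae_eq_Icc
    have c5 : (∫⁻ v in Icc a b,
          (ENNReal.ofReal h)⁻¹ * ∫⁻ u in Icc (-h) h,
            ‖Set.indicator (Icc a b) x (v + u) - Set.indicator (Icc a b) x v‖₊)
        = (ENNReal.ofReal h)⁻¹ * ∫⁻ v in Icc a b, ∫⁻ u in Icc (-h) h,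
            ‖Set.indicator (Icc a b) x (v + u) - Set.indicator (Icc a b) x v‖₊ := by
      apply lintegral_const_mul'
      exact ENNReal.inv_ne_top.2 (ENNReal.ofReal_pos.2 h0).ne'
    have c6 : (∫⁻ v in Icc a b, ∫⁻ u in Icc (-h) h,
          ‖Set.indicator (Icc a b) x (v + u) - Set.indicator (Icc a b) x v‖₊)
        = ∫⁻ u in Icc (-h) h, ∫⁻ v in Icc a b,
            ‖Set.indicator (Icc a b) x (v + u) - Set.indicator (Icc a b) x v‖₊ :=
      lintegral_lintegral_swap hGm
    have c7 : (∫⁻ u in Icc (-h) h, ∫⁻ v in Icc a b,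
          ‖Set.indicator (Icc a b) x (v + u) - Set.indicator (Icc a b) x v‖₊)
        ≤ ∫⁻ _ in Icc (-h) h, ENNReal.ofReal (w1 a b x h) := by
      apply setLIntegral_mono' measurableSet_Icc
      intro u hu
      have hint : IntegrableOn (fun v => Set.indicator (Icc a b) x (v + u)
          - Set.indicator (Icc a b) x v) (Icc a b) := (shift_integrable hx u).integrableOn
      have heq : (∫⁻ v in Icc a b,
          (‖Set.indicator (Icc a b) x (v + u) - Set.indicator (Icc a b) x v‖₊ : ENNReal))
          = ENNReal.ofReal (Tosc a b x u) := by
        rw [Tosc, integral_norm_eq_lintegral_enorm hint.aestronglyMeasurable]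
        exact (ENNReal.ofReal_toReal hint.hasFiniteIntegral.ne).symm
      rw [heq]
      apply ENNReal.ofReal_le_ofReal
      apply Tosc_le_w1 hx
      rwa [abs_of_pos h0]
    have c8 : (∫⁻ _ in Icc (-h) h, ENNReal.ofReal (w1 a b x h))
        = ENNReal.ofReal (w1 a b x h) * ENNReal.ofReal (2 * h) := by
      rw [setLIntegral_const, Real.volume_Icc]
      congr 1
      ring_nf
    calc (∫⁻ v in Icc a b, ‖pirep a b n x v - x v‖₊)
        = ∑ i ∈ Finset.Icc 1 n,
            ∫⁻ v in Ico (tnode a b n (i - 1)) (tnode a b n i), ‖pirep a b n x v - x v‖₊ := by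
          rw [c1, c2]
      _ ≤ ∑ i ∈ Finset.Icc 1 n,
            ∫⁻ v in Ico (tnode a b n (i - 1)) (tnode a b n i),
              (ENNReal.ofReal h)⁻¹ * ∫⁻ u in Icc (-h) h,
                ‖Set.indicator (Icc a b) x (v + u) - Set.indicator (Icc a b) x v‖₊ :=
          Finset.sum_le_sum c3
      _ = (ENNReal.ofReal h)⁻¹ * ∫⁻ v in Icc a b, ∫⁻ u in Icc (-h) h,
            ‖Set.indicator (Icc a b) x (v + u) - Set.indicator (Icc a b) x v‖₊ := by
          rw [c4, c5]
      _ ≤ (ENNReal.ofReal h)⁻¹ * (ENNReal.ofReal (w1 a b x h) * ENNReal.ofReal (2 * h)) := by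
          rw [c6]
          exact mul_le_mul_right (c7.trans (le_of_eq c8)) _
      _ = ENNReal.ofReal (2 * w1 a b x h) := by
          rw [ENNReal.ofReal_mul (by norm_num : (0:ℝ) ≤ 2)]
          rw [ENNReal.ofReal_mul (by norm_num : (0:ℝ) ≤ 2)]
          rw [show (ENNReal.ofReal h)⁻¹ * (ENNReal.ofReal (w1 a b x h)
              * (ENNReal.ofReal 2 * ENNReal.ofReal h))
            = (ENNReal.ofReal 2 * ENNReal.ofReal (w1 a b x h))
              * ((ENNReal.ofReal h)⁻¹ * ENNReal.ofReal h) by ring]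
          rw [ENNReal.inv_mul_cancel (ENNReal.ofReal_pos.2 h0).ne' ENNReal.ofReal_ne_top,
            mul_one]
  calc (∫ v in Icc a b, ‖pirep a b n x v - x v‖)
      = (∫⁻ v in Icc a b, ‖pirep a b n x v - x v‖₊).toReal :=
        integral_norm_eq_lintegral_enorm hsub_aesm
    _ ≤ 2 * w1 a b x h :=
        ENNReal.toReal_le_of_le_ofReal
          (mul_nonneg (by norm_num) (w1_nonneg hx h)) key

end Aux

/-! ### Continuity of translation in `L¹` and convergence -/

lemma tendsto_translate_L1 (f : ℝ → ℂ) (hf : Integrable f volume) :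
    Tendsto (fun u : ℝ => ∫ v, ‖f (v + u) - f v‖) (nhds 0) (nhds 0) := by
  haveI : Fact ((1 : ENNReal) ≤ 1) := ⟨le_rfl⟩
  set G : C(ℝ × ℝ, ℝ) := ⟨fun p => p.2 + p.1, by continuity⟩ with hG
  have hgm : ∀ u : ℝ, MeasurePreserving (fun v : ℝ => v + u) volume volume :=
    fun u => measurePreserving_add_right volume u
  set F0 : Lp ℂ 1 (volume : Measure ℝ) := hf.toL1 f with hF0
  set Φ : ℝ → Lp ℂ 1 (volume : Measure ℝ) :=
    fun u => Lp.compMeasurePreserving (fun v : ℝ => v + u) (hgm u) F0 with hΦ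
  have hcont : Tendsto Φ (nhds 0) (nhds (Φ 0)) := by
    have h2 : Tendsto (fun u : ℝ => G.curry u) (nhds 0) (nhds (G.curry 0)) :=
      G.curry.continuous.tendsto 0
    exact Filter.Tendsto.compMeasurePreservingLp (μ := (volume : Measure ℝ))
      (f := fun _ : ℝ => F0) (f₀ := F0) (g := fun u => G.curry u) (g₀ := G.curry 0)
      tendsto_const_nhds h2 (fun u => hgm u) (hgm 0) ENNReal.one_ne_top
  have hτ : Tendsto (fun u => ‖Φ u - Φ 0‖) (nhds 0) (nhds 0) := by
    have := (hcont.sub (tendsto_const_nhds (x := Φ 0))).norm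
    simpa using this
  have e1 : ∀ u : ℝ, (Φ u : ℝ → ℂ) =ᵐ[volume] fun v => f (v + u) := by
    intro u
    have c1 : (Φ u : ℝ → ℂ) =ᵐ[volume] (F0 : ℝ → ℂ) ∘ (fun v => v + u) :=
      Lp.coeFn_compMeasurePreserving F0 (hgm u)
    have c2 : ((F0 : ℝ → ℂ) ∘ (fun v => v + u)) =ᵐ[volume] (f ∘ (fun v => v + u)) :=
      (hgm u).quasiMeasurePreserving.ae_eq_comp (hf.coeFn_toL1)
    exact c1.trans c2
  have e0 : (Φ 0 : ℝ → ℂ) =ᵐ[volume] f := by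
    have := e1 0
    simpa using this
  have heq : ∀ u : ℝ, (∫ v, ‖f (v + u) - f v‖) = ‖Φ u - Φ 0‖ := by
    intro u
    have e2 : (↑(Φ u - Φ 0) : ℝ → ℂ) =ᵐ[volume] fun v => f (v + u) - f v := by
      filter_upwards [Lp.coeFn_sub (Φ u) (Φ 0), e1 u, e0] with v h1 h2 h3
      rw [h1]; simp [h2, h3]
    rw [L1.norm_eq_integral_norm]
    exact integral_congr_ae (e2.symm.fun_comp norm)
  simp_rw [heq]
  exact hτ

lemma tendsto_w1 {a b : ℝ} {x : ℝ → ℂ} (hab : a < b) (hx : IntegrableOn x (Icc a b)) :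
    Tendsto (fun n : ℕ => w1 a b x ((b - a) / n)) atTop (nhds 0) := by
  have hτ := tendsto_translate_L1 _ (xt_integrable hx)
  rw [NormedAddCommGroup.tendsto_nhds_zero]
  intro ε hε
  obtain ⟨δ, hδ, hδ2⟩ := Metric.tendsto_nhds_nhds.1 hτ (ε / 2) (by linarith)
  have hb : Tendsto (fun n : ℕ => (b - a) / n) atTop (nhds 0) :=
    tendsto_const_div_atTop_nhds_zero_nat (b - a)
  have hev : ∀ᶠ n : ℕ in atTop, |(b - a) / n| < δ := by
    obtain ⟨N, hN⟩ := Metric.tendsto_atTop.1 hb δ hδ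
    exact eventually_atTop.2 ⟨N, fun n hn => by
      simpa [Real.dist_eq, abs_div] using hN n hn⟩
  filter_upwards [hev] with n hn
  rw [Real.norm_eq_abs, abs_of_nonneg (w1_nonneg hx _)]
  have hle : w1 a b x ((b - a) / n) ≤ ε / 2 := by
    apply w1_le
    intro u hu
    refine (Tosc_le_integral hx u).trans ?_
    have hd : dist u 0 < δ := by
      rw [Real.dist_eq, sub_zero]
      exact lt_of_le_of_lt hu hn
    have := hδ2 hd
    rw [Real.dist_eq, sub_zero] at this
    calc (∫ v, ‖Set.indicator (Icc a b) x (v + u) - Set.indicator (Icc a b) x v‖)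
        ≤ |∫ v, ‖Set.indicator (Icc a b) x (v + u) - Set.indicator (Icc a b) x v‖| :=
          le_abs_self _
      _ ≤ ε / 2 := le_of_lt this
  linarith

/-- For every `x ∈ L¹([a,b],ℂ)` and every `n ≥ 1`, `‖π_n(x) - x‖₁ ≤ 2 w₁(x, h_n)`;
consequently `π_n(x) → x` in `L¹([a,b],ℂ)` as `n → ∞`. -/
theorem pin_approximation (a b : ℝ) (hab : a < b) :
    (∀ x : ℝ → ℂ, IntegrableOn x (Icc a b) → ∀ n : ℕ, 1 ≤ n →
      (∫ v in Icc a b, ‖pirep a b n x v - x v‖) ≤ 2 * w1 a b x ((b - a) / n)) ∧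
    (∀ x : ℝ → ℂ, IntegrableOn x (Icc a b) →
      Tendsto (fun n : ℕ => ∫ v in Icc a b, ‖pirep a b n x v - x v‖) atTop (nhds 0)) := by
  constructor
  · intro x hx n hn
    exact main_bound hab hx hn
  · intro x hx
    apply squeeze_zero' (Eventually.of_forall fun n =>
      integral_nonneg fun v => norm_nonneg _)
    · exact eventually_atTop.2 ⟨1, fun n hn => main_bound hab hx hn⟩
    · have := (tendsto_w1 hab hx).const_mul (2 : ℝ)
      simpa using this
end
end
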